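/- arXiv:math/0212163 — 3 statements merged into one kernel-verified Lean document; each statement's English description precedes it below -/
import Mathlib

section
/- The number of permutations of {1,...,n} that avoid the pattern 321 equals the n-th Catalan number. -/
/-- A permutation of `{1,...,n}` (modeled as `Fin n`) avoids the pattern 321 if there
are no indices `i < j < k` with `π i > π j > π k`. -/
def Avoids321 {n : ℕ} (π : Equiv.Perm (Fin n)) : Prop :=
  ¬ ∃ i j k : Fin n, i < j ∧ j < k ∧ π k < π j ∧ π j < π i


theorem List.chain'_singleton {α : Type*} {R : α → α → Prop} (a : α) : List.Chain' R [a] :=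
  List.isChain_singleton a

theorem List.chain'_cons {α : Type*} {R : α → α → Prop} {x y : α} {l : List α} :
    List.Chain' R (x :: y :: l) ↔ R x y ∧ List.Chain' R (y :: l) :=
  List.isChain_cons_cons

theorem List.chain'_cons' {α : Type*} {R : α → α → Prop} {x : α} {l : List α} :
    List.Chain' R (x :: l) ↔ (∀ y ∈ List.head? l, R x y) ∧ List.Chain' R l :=
  List.isChain_cons

theorem List.Chain'.tail {α : Type*} {R : α → α → Prop} {l : List α} (h : List.Chain' R l) :
    List.Chain' R l.tail :=
  List.IsChain.tail h

theorem List.eq_of_perm_of_sorted {α : Type*} {r : α → α → Prop} [Std.Antisymm r]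
    {l₁ l₂ : List α} (hp : List.Perm l₁ l₂) (h1 : List.Pairwise r l₁) (h2 : List.Pairwise r l₂) :
    l₁ = l₂ :=
  List.Perm.eq_of_pairwise' h1 h2 hp

open List DyckStep

/-- 321-avoidance for lists. -/
def AvL (l : List ℕ) : Prop := ∀ a b c : ℕ, [a, b, c] <+ l → b < a → c < b → False

lemma AvL.sublist {l l' : List ℕ} (h : AvL l) (hs : l' <+ l) : AvL l' :=
  fun a b c ht => h a b c (ht.trans hs)

/-- running maximum (+1) sequence -/
def runM : ℕ → List ℕ → List ℕ
  | _, [] => []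
  | m, a :: t => max m (a+1) :: runM (max m (a+1)) t

/-- reconstruct a 321-avoiding list from its running max sequence, keeping a pool
of available small values -/
def fillP : ℕ → List ℕ → List ℕ → List ℕ
  | _, _, [] => []
  | prev, q, m :: t =>
    if prev < m then (m-1) :: fillP m (q ++ range' prev (m-1-prev)) t
    else q.headI :: fillP prev q.tail t

/-- Dyck steps from a running max sequence -/
def wordA : ℕ → List ℕ → List DyckStep
  | _, [] => []
  | prev, m :: t => replicate (m - prev) U ++ D :: wordA m t

/-- running max sequence from Dyck steps -/
def toM : ℕ → List DyckStep → List ℕ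
  | _, [] => []
  | prev, U :: t => toM (prev+1) t
  | prev, D :: t => prev :: toM prev t

lemma runM_length (m : ℕ) (l : List ℕ) : (runM m l).length = l.length := by
  induction l generalizing m with
  | nil => rfl
  | cons a t ih => simp [runM, ih]

lemma runM_chain' (m : ℕ) (l : List ℕ) : Chain' (· ≤ ·) (m :: runM m l) := by
  induction l generalizing m with
  | nil => exact chain'_singleton m
  | cons a t ih =>
    rw [runM, chain'_cons]
    exact ⟨le_max_left _ _, ih _⟩
-- appended to s1
section S2
open List DyckStep

/-- extract three increasing indices as a sublist -/
lemma triple_sublist {l : List ℕ} (i j k : Fin l.length) (hij : i < j) (hjk : j < k) :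
    [l.get i, l.get j, l.get k] <+ l := by
  have hij' : (i:ℕ) < j := hij
  have hjk' : (j:ℕ) < k := hjk
  have h3 : [l.get k] <+ l.drop ((j:ℕ)+1) := by
    have : l.drop (k:ℕ) <+ l.drop ((j:ℕ)+1) := by
      rw [show (k:ℕ) = ((j:ℕ)+1) + ((k:ℕ) - ((j:ℕ)+1)) by omega, ← List.drop_drop]
      exact List.drop_sublist _ _
    refine List.Sublist.trans ?_ this
    rw [← List.getElem_cons_drop k.2]
    exact (List.nil_sublist _).cons₂ _
  have h2 : [l.get j, l.get k] <+ l.drop ((i:ℕ)+1) := by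
    have hd : [l.get j, l.get k] <+ l.drop (j:ℕ) := by
      rw [← List.getElem_cons_drop j.2]
      exact h3.cons₂ _
    refine hd.trans ?_
    rw [show (j:ℕ) = ((i:ℕ)+1) + ((j:ℕ) - ((i:ℕ)+1)) by omega, ← List.drop_drop]
    exact List.drop_sublist _ _
  have h1 : [l.get i, l.get j, l.get k] <+ l.drop (i:ℕ) := by
    rw [← List.getElem_cons_drop i.2]
    exact h2.cons₂ _
  exact h1.trans (List.drop_sublist _ _)

lemma nodup_ne_of_pair {l : List ℕ} (h : l.Nodup) {a b : ℕ} (hs : [a, b] <+ l) : a ≠ b := by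
  have := (pairwise_iff_forall_sublist.1 h) hs
  exact this

/-- foldl max bound lemmas -/
lemma foldl_nmax_le {l : List ℕ} {c m : ℕ} (h : ∀ x ∈ l, x + 1 ≤ c) (hm : m ≤ c) :
    l.foldl (fun a x => max a (x+1)) m ≤ c := by
  induction l generalizing m with
  | nil => exact hm
  | cons a t ih =>
    exact ih (fun x hx => h x (mem_cons_of_mem _ hx))
      (max_le hm (h a (mem_cons_self)))

lemma le_foldl_nmax_self {l : List ℕ} (m : ℕ) :
    m ≤ l.foldl (fun a x => max a (x+1)) m := by
  induction l generalizing m with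
  | nil => exact le_rfl
  | cons a t ih => exact le_trans (le_max_left _ _) (ih _)

lemma le_foldl_nmax_mem {l : List ℕ} {x m : ℕ} (hx : x ∈ l) :
    x + 1 ≤ l.foldl (fun a x => max a (x+1)) m := by
  induction l generalizing m with
  | nil => simp at hx
  | cons a t ih =>
    rcases mem_cons.1 hx with rfl | hx
    · exact le_trans (le_max_right _ _) (le_foldl_nmax_self _)
    · exact ih hx

lemma runM_get (l : List ℕ) (m : ℕ) (i : ℕ) (h : i < (runM m l).length) :
    (runM m l).get ⟨i, h⟩ = (l.take (i+1)).foldl (fun a x => max a (x+1)) m := by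
  induction l generalizing m i with
  | nil => simp [runM] at h
  | cons a t ih =>
    rcases i with _ | i
    · rcases t with _ | ⟨b, t⟩ <;> simp [runM]
    · have h' : i < (runM (max m (a+1)) t).length := by
        simpa [runM, runM_length] using h
      have := ih (max m (a+1)) i h'
      simpa [runM] using this

lemma runM_get_ge (l : List ℕ) (hl : l.Nodup) (i : ℕ) (h : i < (runM 0 l).length) :
    i + 1 ≤ (runM 0 l).get ⟨i, h⟩ := by
  rw [runM_get]
  set F := (l.take (i+1)).foldl (fun a x => max a (x+1)) 0 with hF
  have hlen : (l.take (i+1)).length = i + 1 := by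
    rw [length_take]
    have := runM_length 0 l
    omega
  have hnd : (l.take (i+1)).Nodup := hl.sublist (take_sublist _ _)
  have hsub : (l.take (i+1)).toFinset ⊆ Finset.range F := by
    intro x hx
    rw [mem_toFinset] at hx
    rw [Finset.mem_range]
    exact le_foldl_nmax_mem hx
  have := Finset.card_le_card hsub
  rw [toFinset_card_of_nodup hnd, hlen, Finset.card_range] at this
  exact this

lemma getLastD_runM_of_perm {l : List ℕ} {n : ℕ} (hp : l ~ range n) :
    (runM 0 l).getLastD 0 = n := by
  have hform : ∀ (t : List ℕ) (m : ℕ), (runM m t).getLastD m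
      = t.foldl (fun a x => max a (x+1)) m := by
    intro t
    induction t with
    | nil => intro m; rfl
    | cons a t ih => intro m; rw [runM, getLastD_cons, ih]; rfl
  rw [hform]
  rcases Nat.eq_zero_or_pos n with rfl | hn
  · have : l = [] := by simpa using hp.eq_nil
    simp [this]
  · apply Nat.le_antisymm
    · exact foldl_nmax_le (fun x hx => by
        have := hp.mem_iff.1 hx; rw [mem_range] at this; omega) (by omega)
    · have hmem : n - 1 ∈ l := hp.mem_iff.2 (by rw [mem_range]; omega)
      have := le_foldl_nmax_mem (m := 0) hmem
      omega
end S2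
section S3
open List DyckStep

lemma chain'_le_getLastD {m : ℕ} {t : List ℕ} (h : Chain' (· ≤ ·) (m :: t)) :
    m ≤ t.getLastD m := by
  induction t generalizing m with
  | nil => exact le_rfl
  | cons b t ih =>
    rw [chain'_cons] at h
    rw [getLastD_cons]
    exact le_trans h.1 (ih h.2)

section FillP
variable {m : ℕ} {t : List ℕ}

lemma h2_shift {d : ℕ} (h2 : ∀ i (h : i < (m :: t).length), d + i + 1 ≤ (m :: t)[i]) :
    ∀ i (h : i < t.length), (d + 1) + i + 1 ≤ t[i] := by
  intro i h
  have := h2 (i+1) (by simp only [length_cons]; omega)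
  rw [List.getElem_cons_succ] at this
  omega

lemma h2_head {d : ℕ} (h2 : ∀ i (h : i < (m :: t).length), d + i + 1 ≤ (m :: t)[i]) :
    d + 1 ≤ m := by
  have := h2 0 (by simp only [length_cons]; omega)
  rw [List.getElem_cons_zero] at this
  omega

lemma fillP_perm (M : List ℕ) : ∀ (prev d n : ℕ) (q : List ℕ),
    Chain' (· ≤ ·) (prev :: M) →
    (∀ i (h : i < M.length), d + i + 1 ≤ M[i]) →
    q.length + d = prev →
    M.length + d = n →
    M.getLastD prev = n →
    fillP prev q M ~ q ++ range' prev (n - prev) := by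
  induction M with
  | nil =>
    intro prev d n q _ _ h3 h4 h5
    simp only [getLastD] at h5
    simp only [length] at h4
    have hq : q = [] := by
      rw [← List.length_eq_zero_iff]
      omega
    subst hq
    simp [fillP, show n - prev = 0 by omega]
  | cons m t ih =>
    intro prev d n q h1 h2 h3 h4 h5
    rw [chain'_cons] at h1
    have hpm : prev ≤ m := h1.1
    have hmlast : m ≤ t.getLastD m := chain'_le_getLastD h1.2
    have hlast : t.getLastD m = n := by rw [getLastD_cons] at h5; exact h5
    have hd1m : d + 1 ≤ m := h2_head h2
    have h4' : t.length + (d + 1) = n := by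
      simp only [length_cons] at h4; omega
    by_cases hrec : prev < m
    · rw [fillP, if_pos hrec]
      have h3' : (q ++ range' prev (m-1-prev)).length + (d+1) = m := by
        simp only [length_append, length_range']
        omega
      have := ih m (d+1) n (q ++ range' prev (m-1-prev)) h1.2 (h2_shift h2) h3' h4' hlast
      refine ((this.cons (m-1)).trans ?_)
      have e1 : range' prev (m-1-prev) ++ range' (m-1) (n-m+1) = range' prev (n - prev) := by
        have := List.range'_append (s := prev) (m := m-1-prev) (n := n-m+1) (step := 1)
        simp only [one_mul] at this
        rw [show prev + (m-1-prev) = m-1 by omega] at this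
        rw [show (m-1-prev) + (n-m+1) = n - prev by omega] at this
        exact this
      have e2 : range' (m-1) (n-m+1) = (m-1) :: range' m (n-m) := by
        rw [List.range'_succ, show m - 1 + 1 = m by omega]
      calc (m-1) :: (q ++ range' prev (m-1-prev) ++ range' m (n-m))
          ~ (q ++ range' prev (m-1-prev)) ++ ((m-1) :: range' m (n-m)) :=
            (List.perm_middle).symm
        _ = q ++ range' prev (n - prev) := by
            rw [← e2, append_assoc, e1]
    · have hm : m = prev := by omega
      subst hm
      rcases q with _ | ⟨h0, q'⟩
      · simp only [length_nil] at h3; omega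
      rw [fillP, if_neg hrec]
      have h3' : q'.length + (d+1) = m := by
        simp only [length_cons] at h3; omega
      have := ih m (d+1) n q' h1.2
        (h2_shift h2) h3' h4' hlast
      simpa using this.cons h0

lemma runM_fillP (M : List ℕ) : ∀ (prev d : ℕ) (q : List ℕ),
    Chain' (· ≤ ·) (prev :: M) →
    (∀ i (h : i < M.length), d + i + 1 ≤ M[i]) →
    q.length + d = prev →
    (∀ x ∈ q, x < prev) →
    runM prev (fillP prev q M) = M := by
  induction M with
  | nil => intro prev d q _ _ _ _; rfl
  | cons m t ih =>
    intro prev d q h1 h2 h3 hq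
    rw [chain'_cons] at h1
    have hd1m : d + 1 ≤ m := h2_head h2
    by_cases hrec : prev < m
    · rw [fillP, if_pos hrec, runM]
      rw [show max prev (m - 1 + 1) = m by omega]
      congr 1
      refine ih m (d+1) _ h1.2 (h2_shift h2) ?_ ?_
      · simp only [length_append, length_range']; omega
      · intro x hx
        rcases mem_append.1 hx with hx | hx
        · exact lt_trans (hq x hx) hrec
        · rw [List.mem_range'_1] at hx; omega
    · have hm : m = prev := by omega
      subst hm
      rcases q with _ | ⟨h0, q'⟩
      · simp only [length_nil] at h3; omega
      rw [fillP, if_neg hrec, runM]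
      have hh0 : h0 < m := hq h0 (mem_cons_self)
      rw [show (h0 :: q').headI = h0 from rfl]
      rw [show max m (h0+1) = m by omega]
      congr 1
      refine ih m (d+1) q' h1.2
        (h2_shift h2) ?_ ?_
      · simp only [length_cons] at h3; omega
      · exact fun x hx => hq x (mem_cons_of_mem _ hx)
end FillP
end S3
section S4
open List DyckStep

lemma fillP_av (M : List ℕ) : ∀ (prev d n : ℕ) (q : List ℕ),
    Chain' (· ≤ ·) (prev :: M) →
    (∀ i (h : i < M.length), d + i + 1 ≤ M[i]) →
    q.length + d = prev →
    M.length + d = n →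
    M.getLastD prev = n →
    Pairwise (· < ·) q →
    (∀ x ∈ q, x < prev) →
    AvL (fillP prev q M) ∧
      (∀ a b : ℕ, [a, b] <+ fillP prev q M → b < a → prev ≤ a) := by
  induction M with
  | nil =>
    intro prev d n q _ _ _ _ _ _ _
    constructor
    · intro a b c hs _ _
      simp [fillP] at hs
    · intro a b hs _
      simp [fillP] at hs
  | cons m t ih =>
    intro prev d n q h1 h2 h3 h4 h5 hsort hqlt
    rw [chain'_cons] at h1
    have hpm : prev ≤ m := h1.1
    have hlast : t.getLastD m = n := by rw [getLastD_cons] at h5; exact h5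
    have hd1m : d + 1 ≤ m := h2_head h2
    have h4' : t.length + (d + 1) = n := by
      simp only [length_cons] at h4; omega
    by_cases hrec : prev < m
    · rw [fillP, if_pos hrec]
      have h3' : (q ++ range' prev (m-1-prev)).length + (d+1) = m := by
        simp only [length_append, length_range']; omega
      have hsort' : Pairwise (· < ·) (q ++ range' prev (m-1-prev)) := by
        rw [pairwise_append]
        refine ⟨hsort, List.pairwise_lt_range', ?_⟩
        intro x hx y hy
        rw [List.mem_range'_1] at hy
        exact lt_of_lt_of_le (hqlt x hx) hy.1
      have hqlt' : ∀ x ∈ q ++ range' prev (m-1-prev), x < m := by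
        intro x hx
        rcases mem_append.1 hx with hx | hx
        · exact lt_trans (hqlt x hx) hrec
        · rw [List.mem_range'_1] at hx; omega
      obtain ⟨ihav, ihdesc⟩ := ih m (d+1) n _ h1.2 (h2_shift h2) h3' h4' hlast hsort' hqlt'
      constructor
      · intro a b c hs hba hcb
        rcases sublist_cons_iff.mp hs with hs' | ⟨r, hr1, hr2⟩
        · exact ihav a b c hs' hba hcb
        · obtain ⟨rfl, rfl⟩ : a = m - 1 ∧ r = [b, c] := by
            constructor <;> injection hr1 with e1 e2 <;> simp [e1, e2]
          have := ihdesc b c hr2 hcb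
          omega
      · intro a b hs hba
        rcases sublist_cons_iff.mp hs with hs' | ⟨r, hr1, hr2⟩
        · have := ihdesc a b hs' hba
          omega
        · have : a = m - 1 := by injection hr1
          omega
    · have hm : m = prev := by omega
      subst hm
      rcases q with _ | ⟨h0, q'⟩
      · simp only [length_nil] at h3; omega
      rw [fillP, if_neg hrec, show (h0 :: q').headI = h0 from rfl,
        show (h0 :: q').tail = q' from rfl]
      have h3' : q'.length + (d+1) = m := by
        simp only [length_cons] at h3; omega
      have hsort' : Pairwise (· < ·) q' := hsort.of_cons
      have hqlt' : ∀ x ∈ q', x < m := fun x hx => hqlt x (mem_cons_of_mem _ hx)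
      have hperm := fillP_perm t m (d+1) n q' h1.2 (h2_shift h2) h3' h4' hlast
      have hkey : ∀ x ∈ fillP m q' t, h0 < x := by
        intro x hx
        rw [hperm.mem_iff, mem_append] at hx
        rcases hx with hx | hx
        · exact (pairwise_cons.1 hsort).1 x hx
        · rw [List.mem_range'_1] at hx
          exact lt_of_lt_of_le (hqlt h0 (mem_cons_self)) hx.1
      obtain ⟨ihav, ihdesc⟩ := ih m (d+1) n q' h1.2 (h2_shift h2) h3' h4' hlast hsort' hqlt'
      constructor
      · intro a b c hs hba hcb
        rcases sublist_cons_iff.mp hs with hs' | ⟨r, hr1, hr2⟩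
        · exact ihav a b c hs' hba hcb
        · obtain ⟨rfl, rfl⟩ : a = h0 ∧ r = [b, c] := by
            constructor <;> injection hr1 with e1 e2 <;> simp [e1, e2]
          have hb : b ∈ fillP m q' t := hr2.mem (mem_cons_self)
          exact absurd hba (not_lt.2 (le_of_lt (hkey b hb)))
      · intro a b hs hba
        rcases sublist_cons_iff.mp hs with hs' | ⟨r, hr1, hr2⟩
        · exact ihdesc a b hs' hba
        · obtain ⟨rfl, rfl⟩ : a = h0 ∧ r = [b] := by
            constructor <;> injection hr1 with e1 e2 <;> simp [e1, e2]
          have hb : b ∈ fillP m q' t := hr2.mem (mem_cons_self)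
          exact absurd hba (not_lt.2 (le_of_lt (hkey b hb)))
end S4
section S5
open List DyckStep

lemma filter_split {prev a : ℕ} (t : List ℕ) (hpa : prev ≤ a + 1)
    (h : Pairwise (fun x z => z < prev → (x < prev ∨ a < x)) t) :
    t.filter (· < a+1) =
      t.filter (· < prev) ++ t.filter (fun y => decide (prev ≤ y ∧ y < a+1)) := by
  induction t with
  | nil => rfl
  | cons x t ih =>
    rw [pairwise_cons] at h
    obtain ⟨hx, h'⟩ := h
    by_cases hx1 : x < prev
    · rw [filter_cons, filter_cons, filter_cons,
        if_pos (by simp; omega), if_pos (by simp [hx1]), if_neg (by simp; omega),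
        cons_append]
      congr 1
      exact ih h'
    · by_cases hx2 : x < a + 1
      · have hnone : ∀ z ∈ t, ¬ z < prev := by
          intro z hz hzp
          rcases hx z hz hzp with h | h <;> omega
        have hnil : t.filter (· < prev) = [] := by
          rw [filter_eq_nil_iff]
          intro z hz
          simp only [decide_eq_true_eq]
          exact hnone z hz
        rw [filter_cons, filter_cons, filter_cons,
          if_pos (by simp [hx2]), if_neg (by simp [hx1]), if_pos (by simp; omega),
          hnil, nil_append]
        congr 1
        apply filter_congr
        intro z hz
        have h2 := hnone z hz
        rw [decide_eq_decide]
        constructor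
        · intro h; exact ⟨by omega, h⟩
        · intro h; exact h.2
      · rw [filter_cons, filter_cons, filter_cons,
          if_neg (by simp [hx2]), if_neg (by simp; omega), if_neg (by simp; omega)]
        exact ih h'

lemma mid_eq_range' {prev a : ℕ} {t : List ℕ} (hpa : prev ≤ a)
    (hnd : Nodup (a :: t)) (hav : AvL (a :: t))
    (hdc : ∀ y, prev ≤ y → y < a → y ∈ t) :
    t.filter (fun y => decide (prev ≤ y ∧ y < a+1)) = range' prev (a - prev) := by
  have hat : a ∉ t := (nodup_cons.1 hnd).1
  have hndt : Nodup t := (nodup_cons.1 hnd).2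
  apply eq_of_perm_of_sorted (r := (· ≤ ·))
  · rw [perm_ext_iff_of_nodup (hndt.filter _) nodup_range']
    intro y
    rw [mem_filter, List.mem_range'_1, decide_eq_true_eq]
    constructor
    · rintro ⟨hyt, hy1, hy2⟩
      have : y ≠ a := fun h => hat (h ▸ hyt)
      omega
    · rintro ⟨hy1, hy2⟩
      exact ⟨hdc y hy1 (by omega), hy1, by omega⟩
  · rw [pairwise_iff_forall_sublist]
    intro x z hs
    have hmemx : x ∈ t.filter _ := hs.mem (mem_cons_self)
    have hmemz : z ∈ t.filter _ := hs.mem (mem_cons_of_mem _ (mem_cons_self))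
    obtain ⟨hxt, hxb⟩ := mem_filter.1 hmemx
    obtain ⟨hzt, hzb⟩ := mem_filter.1 hmemz
    rw [decide_eq_true_eq] at hxb hzb
    have hst : [x, z] <+ t := hs.trans filter_sublist
    have hxz : x ≠ z := pairwise_iff_forall_sublist.1 hndt hst
    by_contra hc
    have hzx : z < x := by omega
    have hxa : x < a := by
      have : x ≠ a := fun h => hat (h ▸ hxt)
      omega
    exact hav a x z (hst.cons₂ a) hxa hzx
  · exact (List.pairwise_lt_range').imp le_of_lt

lemma fillP_runM_of_avoid (l : List ℕ) : ∀ (prev : ℕ),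
    AvL l → Nodup l →
    (∀ x ∈ l, ∀ y, prev ≤ y → y ≤ x → y ∈ l) →
    fillP prev (l.filter (· < prev)) (runM prev l) = l := by
  induction l with
  | nil => intro prev _ _ _; rfl
  | cons a t ih =>
    intro prev hav hnd hdc
    have havt : AvL t := hav.sublist (sublist_cons_self a t)
    have hndt : Nodup t := (nodup_cons.1 hnd).2
    have hat : a ∉ t := (nodup_cons.1 hnd).1
    by_cases hap : a < prev
    · rw [runM, show max prev (a+1) = prev by omega,
        filter_cons, if_pos (by simp [hap]), fillP, if_neg (lt_irrefl prev)]
      rw [show ((a :: t.filter (· < prev)).headI) = a from rfl,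
        show ((a :: t.filter (· < prev)).tail) = t.filter (· < prev) from rfl]
      congr 1
      apply ih prev havt hndt
      intro x hx y hy1 hy2
      have := hdc x (mem_cons_of_mem _ hx) y hy1 hy2
      rcases mem_cons.1 this with rfl | h
      · omega
      · exact h
    · have hpa : prev ≤ a := by omega
      rw [runM, show max prev (a+1) = a + 1 by omega,
        filter_cons, if_neg (by simp; omega), fillP, if_pos (by omega),
        show a + 1 - 1 = a from rfl]
      congr 1
      have hpw : Pairwise (fun x z => z < prev → (x < prev ∨ a < x)) t := by
        rw [pairwise_iff_forall_sublist]
        intro x z hs hzp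
        by_contra hc
        push_neg at hc
        have hxa : x < a := by
          have : x ≠ a := fun h => hat (h ▸ hs.mem (mem_cons_self))
          omega
        exact hav a x z (hs.cons₂ a) hxa (by omega)
      have hdca : ∀ y, prev ≤ y → y < a → y ∈ t := by
        intro y hy1 hy2
        have := hdc a (mem_cons_self) y hy1 (by omega)
        rcases mem_cons.1 this with rfl | h
        · omega
        · exact h
      have hsplit := filter_split t (by omega) hpw
      have hmid := mid_eq_range' hpa hnd hav hdca
      rw [← hmid, ← hsplit]
      apply ih (a+1) havt hndt
      intro x hx y hy1 hy2
      have := hdc x (mem_cons_of_mem _ hx) y (by omega) hy2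
      rcases mem_cons.1 this with rfl | h
      · omega
      · exact h
end S5
section S6
open List DyckStep

lemma wordA_count_D (M : List ℕ) : ∀ prev, (wordA prev M).count D = M.length := by
  induction M with
  | nil => intro prev; rfl
  | cons m t ih =>
    intro prev
    rw [wordA]
    simp [count_append, count_replicate, ih]

lemma wordA_count_U (M : List ℕ) : ∀ prev, Chain' (· ≤ ·) (prev :: M) →
    (wordA prev M).count U = M.getLastD prev - prev := by
  induction M with
  | nil => intro prev _; simp [wordA]
  | cons m t ih =>
    intro prev h1
    rw [chain'_cons] at h1
    have hml := chain'_le_getLastD h1.2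
    rw [wordA, getLastD_cons]
    simp only [count_append, count_replicate, count_cons]
    rw [ih m h1.2]
    simp only [beq_iff_eq, beq_self_eq_true, reduceCtorEq, if_true, if_false, eq_self_iff_true, ite_true, ite_false]
    omega

lemma wordA_prefix (M : List ℕ) : ∀ prev d, Chain' (· ≤ ·) (prev :: M) →
    (∀ i (h : i < M.length), d + i + 1 ≤ M[i]) →
    d ≤ prev →
    ∀ j, d + ((wordA prev M).take j).count D ≤ prev + ((wordA prev M).take j).count U := by
  induction M with
  | nil => intro prev d _ _ hdp j; simp [wordA]; omega
  | cons m t ih =>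
    intro prev d h1 h2 hdp j
    rw [chain'_cons] at h1
    have hd1m : d + 1 ≤ m := h2_head h2
    rw [wordA, take_append]
    simp only [count_append, take_replicate, count_replicate, length_replicate, beq_iff_eq, beq_self_eq_true, reduceCtorEq, if_true, if_false, eq_self_iff_true, ite_true, ite_false]
    rcases Nat.eq_zero_or_pos (j - (m - prev)) with hj | hj
    · rw [hj]
      simp
      omega
    · obtain ⟨j', hj'⟩ : ∃ j', j - (m - prev) = j' + 1 := ⟨j - (m-prev) - 1, by omega⟩
      rw [hj', List.take_succ_cons]
      simp only [count_cons, beq_iff_eq, beq_self_eq_true, reduceCtorEq, if_true, if_false, eq_self_iff_true, ite_true, ite_false]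
      have := ih m (d+1) h1.2 (h2_shift h2) hd1m j'
      have hmin : min j (m - prev) = m - prev := by omega
      rw [hmin]
      omega

lemma wordA_cons_U (m prev : ℕ) (t : List ℕ) (h : prev < m) :
    wordA prev (m :: t) = U :: wordA (prev+1) (m :: t) := by
  rw [wordA, wordA, show m - prev = (m - (prev+1)) + 1 by omega, replicate_succ]
  rfl

lemma toM_mem_ge (w : List DyckStep) : ∀ prev, ∀ x ∈ toM prev w, prev ≤ x := by
  induction w with
  | nil => intro prev x hx; simp [toM] at hx
  | cons s t ih =>
    intro prev x hx
    cases s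
    · rw [toM] at hx
      exact le_trans (Nat.le_succ _) (ih _ x hx)
    · rw [toM] at hx
      rcases mem_cons.1 hx with rfl | hx
      · exact le_rfl
      · exact ih _ x hx

lemma toM_chain' (w : List DyckStep) : ∀ prev, Chain' (· ≤ ·) (prev :: toM prev w) := by
  induction w with
  | nil => intro prev; exact chain'_singleton _
  | cons s t ih =>
    intro prev
    cases s
    · rw [toM, chain'_cons']
      refine ⟨?_, (ih (prev+1)).tail⟩
      intro y hy
      exact le_trans (Nat.le_succ _) (toM_mem_ge t (prev+1) y (mem_of_mem_head? hy))
    · rw [toM, chain'_cons]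
      exact ⟨le_rfl, ih prev⟩

lemma toM_length (w : List DyckStep) : ∀ prev, (toM prev w).length = w.count D := by
  induction w with
  | nil => intro prev; rfl
  | cons s t ih =>
    intro prev
    cases s <;> simp [toM, count_cons, ih]

lemma wordA_toM (w : List DyckStep) : ∀ prev, (w = [] ∨ w.getLast? = some D) →
    wordA prev (toM prev w) = w := by
  induction w with
  | nil => intro prev _; rfl
  | cons s t ih =>
    intro prev hw
    have hw' : s :: t ≠ [] := cons_ne_nil _ _
    cases s
    · -- U case
      have hlast : (U :: t).getLast? = some D := hw.resolve_left hw'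
      rcases t with _ | ⟨b, t'⟩
      · simp at hlast
      have hlt : (b :: t').getLast? = some D := by
        rwa [getLast?_cons_cons] at hlast
      have hDmem : D ∈ b :: t' := by
        obtain ⟨hh, he⟩ := List.mem_getLast?_eq_getLast (x := D) (by rw [hlt]; rfl)
        rw [he]
        exact List.getLast_mem hh
      have hne : toM (prev+1) (b :: t') ≠ [] := by
        intro hcon
        have hl := toM_length (b :: t') (prev+1)
        rw [hcon, length_nil] at hl
        have hpos : 0 < count D (b :: t') := List.count_pos_iff.2 hDmem
        omega
      obtain ⟨m, X, hmX⟩ := List.exists_cons_of_ne_nil hne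
      have hm : prev + 1 ≤ m := by
        refine toM_mem_ge (b :: t') (prev+1) m ?_
        rw [hmX]; exact mem_cons_self
      rw [show toM prev (U :: b :: t') = toM (prev+1) (b :: t') from rfl, hmX,
        wordA_cons_U m prev X (by omega), ← hmX, ih (prev+1) (Or.inr hlt)]
    · -- D case
      rw [toM, wordA]
      simp only [Nat.sub_self, replicate_zero, nil_append]
      congr 1
      rcases t with _ | ⟨b, t'⟩
      · rfl
      · refine ih prev (Or.inr ?_)
        have := hw.resolve_left hw'
        rwa [getLast?_cons_cons] at this

lemma toM_get_ge (w : List DyckStep) : ∀ pp dd,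
    (∀ j, dd + ((w.take j).count D) ≤ pp + ((w.take j).count U)) →
    ∀ i (h : i < (toM pp w).length), dd + i + 1 ≤ (toM pp w)[i] := by
  induction w with
  | nil => intro pp dd _ i h; simp [toM] at h
  | cons s t ih =>
    intro pp dd hpre i h
    cases s
    · simp only [toM] at h ⊢
      refine ih (pp+1) dd ?_ i h
      intro j
      have h5 := hpre (j+1)
      rw [List.take_succ_cons] at h5
      simp only [count_cons, count_nil, beq_iff_eq, beq_self_eq_true, reduceCtorEq, if_true, if_false, eq_self_iff_true, ite_true, ite_false] at h5
      omega
    · simp only [toM] at h ⊢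
      rcases i with _ | i
      · have h5 := hpre 1
        rw [show (1:ℕ) = 0 + 1 from rfl, List.take_succ_cons, take_zero] at h5
        simp only [count_cons, count_nil] at h5
        simp only [count_cons, count_nil, beq_iff_eq, beq_self_eq_true, reduceCtorEq, if_true, if_false, eq_self_iff_true, ite_true, ite_false] at h5
        rw [List.getElem_cons_zero]
        omega
      · rw [List.getElem_cons_succ]
        have h6 : ∀ j, (dd+1) + ((t.take j).count D) ≤ pp + ((t.take j).count U) := by
          intro j
          have h5 := hpre (j+1)
          rw [List.take_succ_cons] at h5
          simp only [count_cons] at h5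
          simp only [count_cons, count_nil, beq_iff_eq, beq_self_eq_true, reduceCtorEq, if_true, if_false, eq_self_iff_true, ite_true, ite_false] at h5
          omega
        have := ih pp (dd+1) h6 i (by simpa using h)
        omega

lemma toM_getLastD (w : List DyckStep) : ∀ prev, (w = [] ∨ w.getLast? = some D) →
    (toM prev w).getLastD prev = prev + w.count U := by
  induction w with
  | nil => intro prev _; simp [toM]
  | cons s t ih =>
    intro prev hw
    have hw' : s :: t ≠ [] := cons_ne_nil _ _
    cases s
    · have hlast : (U :: t).getLast? = some D := hw.resolve_left hw'
      rcases t with _ | ⟨b, t'⟩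
      · simp at hlast
      have hlt : (b :: t').getLast? = some D := by
        rwa [getLast?_cons_cons] at hlast
      rw [toM]
      have hne : toM (prev+1) (b :: t') ≠ [] := by
        obtain ⟨hh, he⟩ := List.mem_getLast?_eq_getLast (x := D) (by rw [hlt]; rfl)
        have hDmem : D ∈ b :: t' := he ▸ List.getLast_mem hh
        intro hcon
        have hl := toM_length (b :: t') (prev+1)
        rw [hcon, length_nil] at hl
        have hpos : 0 < count D (b :: t') := List.count_pos_iff.2 hDmem
        omega
      have : (toM (prev+1) (b :: t')).getLastD prev
          = (toM (prev+1) (b :: t')).getLastD (prev+1) := by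
        rw [getLastD_eq_getLast?, getLastD_eq_getLast?,
          getLast?_eq_getLast hne]
        rfl
      rw [this, ih (prev+1) (Or.inr hlt)]
      simp [count_cons]
      omega
    · rw [toM, getLastD_cons]
      have hcond : (t = [] ∨ t.getLast? = some D) := by
        rcases t with _ | ⟨b, t'⟩
        · exact Or.inl rfl
        · refine Or.inr ?_
          have := hw.resolve_left hw'
          rwa [getLast?_cons_cons] at this
      rw [ih prev hcond]
      simp [count_cons]
end S6
section S7
open List DyckStep

lemma replicate_D_inj : ∀ (k k' : ℕ) (w w' : List DyckStep),
    replicate k U ++ D :: w = replicate k' U ++ D :: w' → k = k' ∧ w = w' := by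
  intro k
  induction k with
  | zero =>
    intro k' w w' h
    rcases k' with _ | k'
    · simpa using h
    · rw [replicate_succ] at h
      simp at h
  | succ k ih =>
    intro k' w w' h
    rcases k' with _ | k'
    · rw [replicate_succ] at h
      simp at h
    · rw [replicate_succ, replicate_succ, cons_append, cons_append, cons.injEq] at h
      obtain ⟨h1, h2⟩ := ih k' w w' h.2
      exact ⟨by omega, h2⟩

lemma wordA_inj (M : List ℕ) : ∀ (M' : List ℕ) (prev : ℕ),
    Chain' (· ≤ ·) (prev :: M) → Chain' (· ≤ ·) (prev :: M') →
    wordA prev M = wordA prev M' → M = M' := by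
  induction M with
  | nil =>
    intro M' prev _ _ h
    rcases M' with _ | ⟨m', t'⟩
    · rfl
    · rw [wordA, wordA] at h
      exact absurd h.symm (by simp)
  | cons m t ih =>
    intro M' prev hc hc' h
    rcases M' with _ | ⟨m', t'⟩
    · rw [wordA, wordA] at h
      exact absurd h (by simp)
    · rw [wordA, wordA] at h
      obtain ⟨h1, h2⟩ := replicate_D_inj _ _ _ _ h
      rw [chain'_cons] at hc hc'
      have hm : m = m' := by omega
      subst hm
      rw [ih t' m hc.2 hc'.2 h2]

variable {n : ℕ}

/-- The Dyck word associated to an avoiding list -/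
noncomputable def listToDyck (l : List ℕ) (hl : l ~ range n) : DyckWord where
  toList := wordA 0 (runM 0 l)
  count_U_eq_count_D := by
    have hnd : l.Nodup := hl.nodup_iff.2 (nodup_range)
    rw [wordA_count_U _ 0 (runM_chain' 0 l), wordA_count_D,
      getLastD_runM_of_perm hl, runM_length]
    rw [hl.length_eq, length_range]
    omega
  count_D_le_count_U i := by
    have hnd : l.Nodup := hl.nodup_iff.2 (nodup_range)
    have := wordA_prefix (runM 0 l) 0 0 (runM_chain' 0 l)
      (fun i h => by simpa using runM_get_ge l hnd i h) le_rfl i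
    omega

lemma listToDyck_semilength (l : List ℕ) (hl : l ~ range n) :
    (listToDyck l hl).semilength = n := by
  have : (listToDyck l hl).semilength = (wordA 0 (runM 0 l)).count U := rfl
  rw [this, wordA_count_U _ 0 (runM_chain' 0 l), getLastD_runM_of_perm hl]
  omega

lemma filter_lt_zero (l : List ℕ) : l.filter (· < 0) = [] := by
  rw [filter_eq_nil_iff]
  intro a _
  simp

/-- injectivity data about a Dyck word -/
lemma dyck_ends_D (p : DyckWord) : p.toList = [] ∨ p.toList.getLast? = some D := by
  by_cases h : p = 0
  · exact Or.inl (DyckWord.toList_eq_nil.2 h)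
  · have h' : p.toList ≠ [] := DyckWord.toList_ne_nil.2 h
    exact Or.inr (by rw [getLast?_eq_getLast h', DyckWord.getLast_eq_D])

section DyckToList
variable (p : DyckWord) (hp : p.semilength = n)

include hp in
lemma dyck_count_D : p.toList.count D = n := by
  rw [← p.count_U_eq_count_D]; exact hp

include hp in
lemma dyck_M_props :
    Chain' (· ≤ ·) (0 :: toM 0 p.toList) ∧
    (∀ i (h : i < (toM 0 p.toList).length), 0 + i + 1 ≤ (toM 0 p.toList)[i]) ∧
    ((toM 0 p.toList).length + 0 = n) ∧
    (toM 0 p.toList).getLastD 0 = n := by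
  refine ⟨toM_chain' _ 0, ?_, ?_, ?_⟩
  · refine toM_get_ge _ 0 0 ?_
    intro j
    have := p.count_D_le_count_U j
    omega
  · rw [toM_length, dyck_count_D p hp]
    omega
  · rw [toM_getLastD _ 0 (dyck_ends_D p), zero_add]
    exact hp

include hp in
lemma dyckToList_perm : fillP 0 [] (toM 0 p.toList) ~ range n := by
  obtain ⟨hc, hg, hl, hL⟩ := dyck_M_props p hp
  have := fillP_perm (toM 0 p.toList) 0 0 n [] hc hg (by simp) hl (by simpa using hL)
  simpa [range_eq_range'] using this

include hp in
lemma dyckToList_av : AvL (fillP 0 [] (toM 0 p.toList)) := by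
  obtain ⟨hc, hg, hl, hL⟩ := dyck_M_props p hp
  exact (fillP_av (toM 0 p.toList) 0 0 n [] hc hg (by simp) hl (by simpa using hL)
    (by simp) (by simp)).1

include hp in
lemma dyckToList_runM : runM 0 (fillP 0 [] (toM 0 p.toList)) = toM 0 p.toList := by
  obtain ⟨hc, hg, hl, hL⟩ := dyck_M_props p hp
  exact runM_fillP (toM 0 p.toList) 0 0 [] hc hg (by simp) (by simp)
end DyckToList
end S7
section S8
open List DyckStep

variable {n : ℕ}

/-- avoiding lists of length n -/
abbrev AvSet (n : ℕ) := {l : List ℕ // l ~ range n ∧ AvL l}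

/-- Dyck words of semilength n -/
abbrev DSet (n : ℕ) := {p : DyckWord // p.semilength = n}

noncomputable def avToDyck (x : AvSet n) : DSet n :=
  ⟨listToDyck x.1 x.2.1, listToDyck_semilength x.1 x.2.1⟩

lemma avToDyck_inj : Function.Injective (avToDyck (n := n)) := by
  rintro ⟨l₁, hp₁, ha₁⟩ ⟨l₂, hp₂, ha₂⟩ h
  have hw : wordA 0 (runM 0 l₁) = wordA 0 (runM 0 l₂) := by
    have := congrArg (fun x : DSet n => x.1.toList) h
    exact this
  have hM : runM 0 l₁ = runM 0 l₂ :=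
    wordA_inj _ _ 0 (runM_chain' 0 l₁) (runM_chain' 0 l₂) hw
  have hnd₁ : l₁.Nodup := hp₁.nodup_iff.2 (nodup_range)
  have hnd₂ : l₂.Nodup := hp₂.nodup_iff.2 (nodup_range)
  have hdc : ∀ (l : List ℕ), l ~ range n → ∀ x ∈ l, ∀ y, 0 ≤ y → y ≤ x → y ∈ l := by
    intro l hp x hx y _ hyx
    rw [hp.mem_iff] at hx ⊢
    rw [mem_range] at hx ⊢
    omega
  have e₁ := fillP_runM_of_avoid l₁ 0 ha₁ hnd₁ (hdc l₁ hp₁)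
  have e₂ := fillP_runM_of_avoid l₂ 0 ha₂ hnd₂ (hdc l₂ hp₂)
  rw [filter_lt_zero] at e₁ e₂
  apply Subtype.ext
  show l₁ = l₂
  rw [← e₁, ← e₂, hM]

noncomputable def dyckToAv (x : DSet n) : AvSet n :=
  ⟨fillP 0 [] (toM 0 x.1.toList), dyckToList_perm x.1 x.2, dyckToList_av x.1 x.2⟩

lemma dyckToAv_inj : Function.Injective (dyckToAv (n := n)) := by
  rintro ⟨p₁, hp₁⟩ ⟨p₂, hp₂⟩ h
  have hl : fillP 0 [] (toM 0 p₁.toList) = fillP 0 [] (toM 0 p₂.toList) :=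
    congrArg (fun x : AvSet n => x.1) h
  have hM : toM 0 p₁.toList = toM 0 p₂.toList := by
    rw [← dyckToList_runM p₁ hp₁, ← dyckToList_runM p₂ hp₂, hl]
  have hw : p₁.toList = p₂.toList := by
    rw [← wordA_toM p₁.toList 0 (dyck_ends_D p₁), ← wordA_toM p₂.toList 0 (dyck_ends_D p₂), hM]
  apply Subtype.ext
  exact DyckWord.ext hw

/-- perm → list -/
def permToList (π : Equiv.Perm (Fin n)) : List ℕ := ofFn (fun i => (π i : ℕ))

lemma permToList_perm (π : Equiv.Perm (Fin n)) : permToList π ~ range n := by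
  have hnp : (finRange n).map ⇑π ~ finRange n := by
    rw [perm_ext_iff_of_nodup ((nodup_finRange n).map π.injective) (nodup_finRange n)]
    intro a
    simp only [mem_map, mem_finRange, true_and, iff_true]
    exact ⟨π.symm a, π.apply_symm_apply a⟩
  have : permToList π = ((finRange n).map ⇑π).map Fin.val := by
    rw [permToList, ofFn_eq_map, map_map]
    rfl
  rw [this, show range n = (finRange n).map Fin.val from
    (List.ext_getElem (by simp) (by simp)).symm]
  exact hnp.map _

lemma permToList_av {π : Equiv.Perm (Fin n)} (hπ : Avoids321 π) : AvL (permToList π) := by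
  intro a b c hs hba hcb
  rw [sublist_iff_exists_fin_orderEmbedding_get_eq] at hs
  obtain ⟨f, hf⟩ := hs
  apply hπ
  have h01 : f ⟨0, by norm_num⟩ < f ⟨1, by norm_num⟩ := f.strictMono (by simp [Fin.lt_def])
  have h12 : f ⟨1, by norm_num⟩ < f ⟨2, by norm_num⟩ := f.strictMono (by simp [Fin.lt_def])
  have hlen : (permToList π).length = n := by unfold permToList; rw [length_ofFn]
  refine ⟨Fin.cast hlen (f ⟨0, by norm_num⟩), Fin.cast hlen (f ⟨1, by norm_num⟩),
    Fin.cast hlen (f ⟨2, by norm_num⟩), by simpa [Fin.lt_def] using h01,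
    by simpa [Fin.lt_def] using h12, ?_, ?_⟩
  · have e1 : b = (π (Fin.cast hlen (f ⟨1, by norm_num⟩)) : ℕ) := by
      have := hf ⟨1, by norm_num⟩
      unfold permToList at this
      rw [get_ofFn] at this
      simp at this; exact this
    have e2 : c = (π (Fin.cast hlen (f ⟨2, by norm_num⟩)) : ℕ) := by
      have := hf ⟨2, by norm_num⟩
      unfold permToList at this
      rw [get_ofFn] at this
      simp at this; exact this
    rw [e1, e2] at hcb
    exact hcb
  · have e0 : a = (π (Fin.cast hlen (f ⟨0, by norm_num⟩)) : ℕ) := by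
      have := hf ⟨0, by norm_num⟩
      unfold permToList at this
      rw [get_ofFn] at this
      simp at this; exact this
    have e1 : b = (π (Fin.cast hlen (f ⟨1, by norm_num⟩)) : ℕ) := by
      have := hf ⟨1, by norm_num⟩
      unfold permToList at this
      rw [get_ofFn] at this
      simp at this; exact this
    rw [e0, e1] at hba
    exact hba

/-- subtype map perm → avset -/
def avPermToAvSet (x : {π : Equiv.Perm (Fin n) // Avoids321 π}) : AvSet n :=
  ⟨permToList x.1, permToList_perm x.1, permToList_av x.2⟩

lemma avPermToAvSet_inj : Function.Injective (avPermToAvSet (n := n)) := by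
  rintro ⟨π₁, h₁⟩ ⟨π₂, h₂⟩ h
  have hl : permToList π₁ = permToList π₂ := congrArg (fun x : AvSet n => x.1) h
  unfold permToList at hl
  have := ofFn_injective hl
  apply Subtype.ext
  ext i
  exact congrFun this i

lemma AvSet.len (x : AvSet n) : x.1.length = n := by
  rw [x.2.1.length_eq, length_range]

lemma AvSet.getlt (x : AvSet n) (i : Fin n) :
    x.1.get (Fin.cast (AvSet.len x).symm i) < n := by
  have hm : x.1.get (Fin.cast (AvSet.len x).symm i) ∈ x.1 := by
    rw [List.get_eq_getElem]
    exact List.getElem_mem _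
  have := x.2.1.subset hm
  rwa [mem_range] at this

/-- the function underlying the permutation of an avoiding list -/
def AvSet.g (x : AvSet n) : Fin n → Fin n :=
  fun i => ⟨x.1.get (Fin.cast (AvSet.len x).symm i), AvSet.getlt x i⟩

lemma AvSet.ginj (x : AvSet n) : Function.Injective (AvSet.g x) := by
  intro i j hij
  have hnd : x.1.Nodup := x.2.1.nodup_iff.2 (nodup_range)
  have h1 : x.1.get (Fin.cast (AvSet.len x).symm i) = x.1.get (Fin.cast (AvSet.len x).symm j) :=
    congrArg Fin.val hij
  have h2 := nodup_iff_injective_get.1 hnd h1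
  have h3 : ((Fin.cast (AvSet.len x).symm i : Fin x.1.length) : ℕ)
      = ((Fin.cast (AvSet.len x).symm j : Fin x.1.length) : ℕ) := congrArg Fin.val h2
  exact Fin.val_injective h3

/-- list → perm -/
noncomputable def avSetToAvPerm (x : AvSet n) : {π : Equiv.Perm (Fin n) // Avoids321 π} :=
  ⟨Equiv.ofBijective (AvSet.g x) (Finite.injective_iff_bijective.1 (AvSet.ginj x)), by
    rintro ⟨i, j, k, hij, hjk, h1, h2⟩
    refine x.2.2 (x.1.get (Fin.cast (AvSet.len x).symm i)) (x.1.get (Fin.cast (AvSet.len x).symm j))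
      (x.1.get (Fin.cast (AvSet.len x).symm k)) ?_ ?_ ?_
    · exact triple_sublist _ _ _ hij hjk
    · exact h2
    · exact h1⟩

lemma avPermToAvSet_avSetToAvPerm (x : AvSet n) : avPermToAvSet (avSetToAvPerm x) = x := by
  apply Subtype.ext
  show permToList _ = x.1
  apply List.ext_get
  · unfold permToList
    rw [length_ofFn, AvSet.len]
  · intro i h1 h2
    unfold permToList
    rw [get_ofFn]
    rfl

lemma avSetToAvPerm_inj : Function.Injective (avSetToAvPerm (n := n)) :=
  Function.LeftInverse.injective avPermToAvSet_avSetToAvPerm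
end S8

/-- The number of 321-avoiding permutations of `{1,...,n}` is the `n`-th Catalan number. -/
theorem avoids321_card_eq_catalan (n : ℕ) :
    Nat.card {π : Equiv.Perm (Fin n) // Avoids321 π} = catalan n := by
  have hfinAvSet : Finite (AvSet n) := Finite.of_injective _ (avToDyck_inj (n := n))
  have h1 : Nat.card {π : Equiv.Perm (Fin n) // Avoids321 π} ≤ Nat.card (AvSet n) :=
    Nat.card_le_card_of_injective _ (avPermToAvSet_inj (n := n))
  have h2 : Nat.card (AvSet n) ≤ Nat.card (DSet n) :=
    Nat.card_le_card_of_injective _ (avToDyck_inj (n := n))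
  have h3 : Nat.card (DSet n) ≤ Nat.card (AvSet n) :=
    Nat.card_le_card_of_injective _ (dyckToAv_inj (n := n))
  have h4 : Nat.card (AvSet n) ≤ Nat.card {π : Equiv.Perm (Fin n) // Avoids321 π} :=
    Nat.card_le_card_of_injective _ (avSetToAvPerm_inj (n := n))
  have hD : Nat.card (DSet n) = catalan n := by
    rw [Nat.card_eq_fintype_card]
    exact DyckWord.card_dyckWord_semilength_eq_catalan n
  omega
end

section
/- The number of permutations of {1,...,n} that avoid 321 equals the number of permutations of {1,...,n} that avoid 132. -/
open List Finset

/-- A permutation avoids 132 if there are no indices `i < j < k` with `π i < π k < π j`. -/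
def Avoids132 {n : ℕ} (π : Equiv.Perm (Fin n)) : Prop :=
  ¬ ∃ i j k : Fin n, i < j ∧ j < k ∧ π i < π k ∧ π k < π j

namespace AvCount

open scoped Classical

def insertIdx (k m : ℕ) (q : List ℕ) : List ℕ := q.insertIdx k m

/-- entry of a list at index `i` -/
def ent (l : List ℕ) (i : ℕ) : ℕ := l.getD i 0

def C132 (l : List ℕ) : Prop :=
  ∃ i j k, i < j ∧ j < k ∧ k < l.length ∧ ent l i < ent l k ∧ ent l k < ent l j

def C321 (l : List ℕ) : Prop :=
  ∃ i j k, i < j ∧ j < k ∧ k < l.length ∧ ent l j < ent l i ∧ ent l k < ent l j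

def Site132 (l : List ℕ) (k : ℕ) : Prop :=
  ∀ i j, i < k → k ≤ j → j < l.length → ent l j < ent l i

def Site321 (l : List ℕ) (k : ℕ) : Prop :=
  ∀ i j, k ≤ i → i < j → j < l.length → ent l i < ent l j

noncomputable def S132 (l : List ℕ) : Finset ℕ := (Finset.range (l.length + 1)).filter (Site132 l)
noncomputable def S321 (l : List ℕ) : Finset ℕ := (Finset.range (l.length + 1)).filter (Site321 l)

noncomputable def lab132 (q : List ℕ) (k : ℕ) : ℕ := 1 + ((S132 q).filter (fun x => k ≤ x)).card
noncomputable def lab321 (q : List ℕ) (k : ℕ) : ℕ :=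
  if k = q.length then (S321 q).card + 1 else q.length + 1 - k

noncomputable def perms (n : ℕ) : Finset (List ℕ) := (List.range n).permutations.toFinset

lemma mem_perms {n : ℕ} {l : List ℕ} : l ∈ perms n ↔ l ~ List.range n := by
  simp [perms, List.mem_permutations]

section ListFacts

variable {q l : List ℕ} {m k i : ℕ}

lemma ent_eq_getElem (h : i < l.length) : ent l i = l[i] := List.getD_eq_getElem l 0 h

lemma ent_mem (h : i < l.length) : ent l i ∈ l := by
  rw [ent_eq_getElem h]; exact List.getElem_mem h

lemma perm_length (h : l ~ List.range m) : l.length = m := by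
  simpa using h.length_eq

lemma perm_nodup (h : l ~ List.range m) : l.Nodup := h.nodup_iff.2 List.nodup_range

lemma ent_lt_of_perm (h : l ~ List.range m) (hi : i < l.length) : ent l i < m := by
  have := ent_mem hi
  have : ent l i ∈ List.range m := h.mem_iff.1 this
  simpa using this

lemma ent_ne (h : l.Nodup) (hi : i < l.length) (hj : k < l.length) (hik : i ≠ k) :
    ent l i ≠ ent l k := by
  rw [ent_eq_getElem hi, ent_eq_getElem hj]
  intro hcon
  exact hik (h.getElem_inj_iff.mp hcon)

lemma ent_insertIdx_lt (hk : k ≤ q.length) (hi : i < k) :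
    ent (insertIdx k m q) i = ent q i := by
  have hi' : i < q.length := lt_of_lt_of_le hi hk
  have hi2 : i < (insertIdx k m q).length := by
    rw [insertIdx, List.length_insertIdx_of_le_length hk]; omega
  rw [ent_eq_getElem hi2, ent_eq_getElem hi']
  exact List.getElem_insertIdx_of_lt hi hi2

lemma ent_insertIdx_self (hk : k ≤ q.length) :
    ent (insertIdx k m q) k = m := by
  have hk2 : k < (insertIdx k m q).length := by
    rw [insertIdx, List.length_insertIdx_of_le_length hk]; omega
  rw [ent_eq_getElem hk2]
  exact List.getElem_insertIdx_self hk2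

lemma ent_insertIdx_gt (hk : k ≤ q.length) (hi : k < i) (hi2 : i < q.length + 1) :
    ent (insertIdx k m q) i = ent q (i - 1) := by
  have h1 : i - 1 < q.length := by omega
  obtain ⟨d, rfl⟩ : ∃ d, i = k + d + 1 := ⟨i - k - 1, by omega⟩
  have h2 : k + d < q.length := by omega
  have hlen : k + d + 1 < (insertIdx k m q).length := by
    rw [insertIdx, List.length_insertIdx_of_le_length hk]; omega
  rw [ent_eq_getElem hlen, ent_eq_getElem h1]
  have := List.getElem_insertIdx_of_gt (l := q) (x := m) (show k < k + d + 1 by omega) hlen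
  exact this

lemma length_insertIdx' (hk : k ≤ q.length) : (insertIdx k m q).length = q.length + 1 :=
  List.length_insertIdx_of_le_length hk m

lemma insertIdx_perm (h : q ~ List.range m) (hk : k ≤ q.length) :
    insertIdx k m q ~ List.range (m + 1) := by
  calc insertIdx k m q ~ m :: q := List.perm_insertIdx m q hk
    _ ~ m :: List.range m := (h.cons m)
    _ ~ List.range m ++ [m] := (List.perm_append_singleton m (List.range m)).symm
    _ = List.range (m + 1) := List.range_succ.symm

lemma indexOf_insertIdx (hm : m ∉ q) (hk : k ≤ q.length) :
    (insertIdx k m q).idxOf m = k := by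
  induction q generalizing k with
  | nil =>
      have : k = 0 := by simpa using hk
      subst this
      simp [insertIdx]
  | cons a t ih =>
      cases k with
      | zero => simp [insertIdx]
      | succ k =>
        have ha : a ≠ m := by intro h; exact hm (h ▸ (List.mem_cons_self : a ∈ a :: t))
        have : insertIdx (k+1) m (a :: t) = a :: insertIdx k m t := rfl
        rw [this, List.idxOf_cons_ne _ ha, ih (fun h => hm (List.mem_cons_of_mem a h)) (by simpa using hk)]

lemma eraseIdx_insertIdx' (hk : k ≤ q.length) : (insertIdx k m q).eraseIdx k = q :=
  List.eraseIdx_insertIdx_self m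

lemma mem_max (h : l ~ List.range (m + 1)) : m ∈ l :=
  h.mem_iff.2 (by simp)

lemma indexOf_lt (h : l ~ List.range (m + 1)) : l.idxOf m < l.length :=
  List.idxOf_lt_length_iff.2 (mem_max h)

lemma indexOf_le (h : l ~ List.range (m + 1)) : l.idxOf m ≤ m := by
  have := indexOf_lt h
  have hl := perm_length h
  omega

/-- reconstruct: l = insert of its max at indexOf -/
lemma insertIdx_indexOf_eraseIdx (h : l ~ List.range (m + 1)) :
    insertIdx (l.idxOf m) m (l.eraseIdx (l.idxOf m)) = l := by
  set k0 := l.idxOf m with hk0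
  have hlt : k0 < l.length := indexOf_lt h
  have hlen_e : (l.eraseIdx k0).length = l.length - 1 := by
    rw [List.length_eraseIdx]; simp [hlt]
  have hk0le : k0 ≤ (l.eraseIdx k0).length := by omega
  unfold insertIdx
  apply List.ext_getElem
  · rw [List.length_insertIdx_of_le_length hk0le]; omega
  · intro i h1 h2
    rcases lt_trichotomy i k0 with hi | hi | hi
    · rw [List.getElem_insertIdx_of_lt hi]
      rw [List.getElem_eraseIdx]
      simp [hi]
    · subst hi
      rw [List.getElem_insertIdx_self]
      exact (List.getElem_idxOf hlt).symm
    · obtain ⟨d, rfl⟩ : ∃ d, i = k0 + d + 1 := ⟨i - k0 - 1, by omega⟩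
      have hd : k0 + d < (l.eraseIdx k0).length := by omega
      rw [List.getElem_insertIdx_of_gt (by omega)]
      rw [List.getElem_eraseIdx]
      simp

lemma eraseIdx_indexOf_perm (h : l ~ List.range (m + 1)) :
    l.eraseIdx (l.idxOf m) ~ List.range m := by
  have h1 : l.eraseIdx (l.idxOf m) = l.erase m := (List.erase_eq_eraseIdx_of_idxOf rfl).symm
  rw [h1]
  have h2 : l.erase m ~ (List.range (m+1)).erase m := h.erase m
  rw [List.range_succ] at h2
  rwa [List.erase_append_right _ (by simp), List.erase_cons_head, List.append_nil] at h2

end ListFacts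


section Class132

variable {q l : List ℕ} {m k : ℕ}

lemma mem_S132 {k : ℕ} : k ∈ S132 q ↔ k ≤ q.length ∧ Site132 q k := by
  unfold S132
  rw [Finset.mem_filter, Finset.mem_range, Nat.lt_succ_iff]

lemma ins132_avoid (hq : q ~ List.range m) (hkle : k ≤ q.length) (hsite : Site132 q k)
    (hav : ¬C132 q) : ¬C132 (insertIdx k m q) := by
  have hm : q.length = m := perm_length hq
  rintro ⟨i, j, kk, hij, hjk, hkk, h1, h2⟩
  rw [length_insertIdx' hkle] at hkk
  have hent : ∀ x, x < q.length + 1 → x ≠ k → ent (insertIdx k m q) x =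
      ent q (if x < k then x else x - 1) := by
    intro x hx hne
    rcases lt_or_gt_of_ne hne with h | h
    · rw [if_pos h]; exact ent_insertIdx_lt hkle h
    · rw [if_neg (by omega)]; exact ent_insertIdx_gt hkle h hx
  have hlt : ∀ x, x < q.length → ent q x < m := fun x hx => ent_lt_of_perm hq hx
  rcases eq_or_ne i k with rfl | hi
  · rw [ent_insertIdx_self hkle] at h1
    rw [hent kk hkk (by omega)] at h1
    have := hlt _ (show (if kk < i then kk else kk - 1) < q.length by split_ifs <;> omega)
    omega
  rcases eq_or_ne kk k with rfl | hkkne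
  · rw [ent_insertIdx_self hkle] at h2
    rw [hent j (by omega) (by omega)] at h2
    have := hlt _ (show (if j < kk then j else j - 1) < q.length by split_ifs <;> omega)
    omega
  rcases eq_or_ne j k with rfl | hj
  · rw [hent i (by omega) hi, hent kk hkk hkkne] at h1
    have h3 := hsite (if i < j then i else i - 1) (if kk < j then kk else kk - 1)
      (by split_ifs <;> omega) (by split_ifs <;> omega) (by split_ifs <;> omega)
    omega
  · rw [hent i (by omega) hi, hent kk hkk hkkne] at h1
    rw [hent kk hkk hkkne, hent j (by omega) hj] at h2
    exact hav ⟨_, _, _, show (if i < k then i else i - 1) < (if j < k then j else j - 1) by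
        split_ifs <;> omega,
      show (if j < k then j else j - 1) < (if kk < k then kk else kk - 1) by
        split_ifs <;> omega,
      by split_ifs <;> omega, h1, h2⟩

lemma erase132_avoid (hq : q ~ List.range m) (hkle : k ≤ q.length)
    (hav : ¬C132 (insertIdx k m q)) : ¬C132 q := by
  rintro ⟨i, j, kk, hij, hjk, hkk, h1, h2⟩
  have hent : ∀ x, x < q.length → ent (insertIdx k m q) (if x < k then x else x + 1) = ent q x := by
    intro x hx
    split
    · exact ent_insertIdx_lt hkle (by omega)
    · rw [ent_insertIdx_gt hkle (by omega) (by omega)]; simp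
  refine hav ⟨(if i < k then i else i + 1), (if j < k then j else j + 1),
    (if kk < k then kk else kk + 1), ?_, ?_, ?_, ?_, ?_⟩
  · split_ifs <;> omega
  · split_ifs <;> omega
  · rw [length_insertIdx' hkle]; split_ifs <;> omega
  · rw [hent i (by omega), hent kk (by omega)]; exact h1
  · rw [hent kk (by omega), hent j (by omega)]; exact h2

lemma erase132_site (hq : q ~ List.range m) (hkle : k ≤ q.length)
    (hav : ¬C132 (insertIdx k m q)) : Site132 q k := by
  intro i j hik hkj hj
  have hnd : q.Nodup := perm_nodup hq
  have hne : ent q j ≠ ent q i := ent_ne hnd hj (by omega) (by omega)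
  rcases lt_or_gt_of_ne hne with h | h
  · exact h
  exfalso
  refine hav ⟨i, k, j + 1, by omega, by omega, ?_, ?_, ?_⟩
  · rw [length_insertIdx' hkle]; omega
  · rw [ent_insertIdx_lt hkle (by omega), ent_insertIdx_gt hkle (by omega) (by omega)]
    simpa using h
  · rw [ent_insertIdx_gt hkle (by omega) (by omega), ent_insertIdx_self hkle]
    simpa using ent_lt_of_perm hq (show j < q.length from hj)

lemma sites132_insert (hq : q ~ List.range m) (hkmem : k ∈ S132 q) :
    S132 (insertIdx k m q) = insert 0 (((S132 q).filter (fun x => k ≤ x)).image (· + 1)) := by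
  obtain ⟨hkle, hsite⟩ := mem_S132.1 hkmem
  have hm : q.length = m := perm_length hq
  have hlen : (insertIdx k m q).length = q.length + 1 := length_insertIdx' hkle
  ext k'
  simp only [Finset.mem_insert, Finset.mem_image, Finset.mem_filter, mem_S132, hlen]
  constructor
  · rintro ⟨hk'le, hk'site⟩
    rcases Nat.eq_zero_or_pos k' with rfl | hpos
    · exact Or.inl rfl
    right
    have hkk' : k < k' := by
      by_contra hcon
      push_neg at hcon
      -- k' ≤ k : contradiction via i = 0, j = k
      have h0 : (0:ℕ) < q.length := by omega
      have := hk'site 0 k (by omega) (by omega) (by omega)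
      rw [ent_insertIdx_self hkle, ent_insertIdx_lt hkle (by omega)] at this
      have := ent_lt_of_perm hq h0
      omega
    refine ⟨k' - 1, ⟨⟨by omega, ?_⟩, by omega⟩, by omega⟩
    intro i j hik' hk'j hjq
    have := hk'site (if i < k then i else i + 1) (j + 1)
      (by split <;> omega) (by omega) (by omega)
    rwa [ent_insertIdx_gt hkle (by omega) (by omega), Nat.add_sub_cancel,
      show ent (insertIdx k m q) (if i < k then i else i + 1) = ent q i by
        split
        · exact ent_insertIdx_lt hkle (by omega)
        · rw [ent_insertIdx_gt hkle (by omega) (by omega)]; simp] at this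
  · rintro (rfl | ⟨x, ⟨⟨hxle, hxsite⟩, hkx⟩, rfl⟩)
    · exact ⟨by omega, fun i j hi => by omega⟩
    refine ⟨by omega, ?_⟩
    intro i j hi hj hjlen
    have hjk : k < j := by omega
    rw [ent_insertIdx_gt hkle hjk (by omega)]
    have hj1 : j - 1 < q.length := by omega
    rcases lt_trichotomy i k with h | rfl | h
    · rw [ent_insertIdx_lt hkle h]
      exact hxsite i (j - 1) (by omega) (by omega) hj1
    · rw [ent_insertIdx_self hkle]
      exact ent_lt_of_perm hq hj1
    · rw [ent_insertIdx_gt hkle h (by omega)]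
      exact hxsite (i - 1) (j - 1) (by omega) (by omega) hj1

lemma card_sites132_insert (hq : q ~ List.range m) (hkmem : k ∈ S132 q) :
    (S132 (insertIdx k m q)).card = lab132 q k := by
  rw [sites132_insert hq hkmem, lab132]
  rw [Finset.card_insert_of_notMem (by simp), Finset.card_image_of_injective _ (fun a b => by omega)]
  omega

lemma lab132_ge (hkmem : k ∈ S132 q) : 2 ≤ lab132 q k := by
  have : k ∈ (S132 q).filter (fun x => k ≤ x) := Finset.mem_filter.2 ⟨hkmem, le_refl k⟩
  have := Finset.card_pos.2 ⟨k, this⟩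
  unfold lab132
  omega

lemma lab132_le (hkmem : k ∈ S132 q) : lab132 q k ≤ (S132 q).card + 1 := by
  have := Finset.card_filter_le (S132 q) (fun x => k ≤ x)
  unfold lab132
  omega

/-- rank lemma -/
lemma rank_lemma : ∀ (j : ℕ) (V : Finset ℕ), j < V.card →
    ∃! k, k ∈ V ∧ (V.filter (fun x => k ≤ x)).card = j + 1 := by
  intro j
  induction j with
  | zero =>
      intro V hV
      have hne : V.Nonempty := Finset.card_pos.1 (by omega)
      refine ⟨V.max' hne, ⟨V.max'_mem hne, ?_⟩, ?_⟩
      · have : V.filter (fun x => V.max' hne ≤ x) = {V.max' hne} := by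
          ext x
          simp only [Finset.mem_filter, Finset.mem_singleton]
          constructor
          · rintro ⟨hx, hle⟩
            exact le_antisymm (V.le_max' x hx) hle
          · rintro rfl
            exact ⟨V.max'_mem hne, le_refl _⟩
        rw [this, Finset.card_singleton]
      · rintro y ⟨hy, hcard⟩
        by_contra hne'
        have hlt : y < V.max' hne := lt_of_le_of_ne (V.le_max' y hy) hne'
        have h2 : {y, V.max' hne} ⊆ V.filter (fun x => y ≤ x) := by
          intro z hz
          simp only [Finset.mem_insert, Finset.mem_singleton] at hz
          rcases hz with rfl | rfl
          · exact Finset.mem_filter.2 ⟨hy, le_refl _⟩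
          · exact Finset.mem_filter.2 ⟨V.max'_mem hne, by omega⟩
        have := Finset.card_le_card h2
        rw [Finset.card_insert_of_notMem (by simp; omega), Finset.card_singleton] at this
        omega
  | succ j ih =>
      intro V hV
      have hne : V.Nonempty := Finset.card_pos.1 (by omega)
      set M := V.max' hne with hM
      have hM1 : M ∈ V := V.max'_mem hne
      have hcard' : (V.erase M).card = V.card - 1 := Finset.card_erase_of_mem hM1
      obtain ⟨k, ⟨hk1, hk2⟩, hk3⟩ := ih (V.erase M) (by omega)
      have hkM : k < M := by
        have := V.le_max' k (Finset.mem_of_mem_erase hk1)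
        rcases lt_or_eq_of_le this with h | h
        · exact h
        · rw [h] at hk1
          exact absurd hk1 (Finset.notMem_erase _ _)
      have key : ∀ y, y ∈ V → y ≠ M →
          (V.filter (fun x => y ≤ x)).card = ((V.erase M).filter (fun x => y ≤ x)).card + 1 := by
        intro y hy hyM
        have hyM' : y < M := lt_of_le_of_ne (V.le_max' y hy) hyM
        have : V.filter (fun x => y ≤ x) = insert M ((V.erase M).filter (fun x => y ≤ x)) := by
          ext z
          simp only [Finset.mem_filter, Finset.mem_insert, Finset.mem_erase]
          constructor
          · rintro ⟨hz, hyz⟩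
            rcases eq_or_ne z M with rfl | hzM
            · exact Or.inl rfl
            · exact Or.inr ⟨⟨hzM, hz⟩, hyz⟩
          · rintro (rfl | ⟨⟨_, hz⟩, hyz⟩)
            · exact ⟨hM1, by omega⟩
            · exact ⟨hz, hyz⟩
        rw [this, Finset.card_insert_of_notMem (by simp)]
      refine ⟨k, ⟨Finset.mem_of_mem_erase hk1, ?_⟩, ?_⟩
      · rw [key k (Finset.mem_of_mem_erase hk1) (by omega), hk2]
      · rintro y ⟨hy, hcard⟩
        have hyM : y ≠ M := by
          intro heq
          have : V.filter (fun x => y ≤ x) = {y} := by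
            ext z
            simp only [Finset.mem_filter, Finset.mem_singleton]
            constructor
            · rintro ⟨hz, hle⟩
              have := V.le_max' z hz
              rw [← hM, ← heq] at this
              omega
            · rintro rfl
              exact ⟨hy, le_refl _⟩
          rw [this, Finset.card_singleton] at hcard
          omega
        have := key y hy hyM
        rw [hcard] at this
        exact hk3 y ⟨Finset.mem_erase.2 ⟨hyM, hy⟩, by omega⟩

lemma uniq132 (t : ℕ) (h2 : 2 ≤ t) (hle : t ≤ (S132 q).card + 1) :
    ∃! k, k ∈ S132 q ∧ lab132 q k = t := by
  obtain ⟨k, ⟨hk1, hk2⟩, hk3⟩ := rank_lemma (t - 2) (S132 q) (by omega)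
  refine ⟨k, ⟨hk1, by unfold lab132; omega⟩, ?_⟩
  rintro y ⟨hy1, hy2⟩
  exact hk3 y ⟨hy1, by unfold lab132 at hy2; omega⟩

end Class132


section Class321

variable {q l : List ℕ} {m k : ℕ}

lemma mem_S321 {k : ℕ} : k ∈ S321 q ↔ k ≤ q.length ∧ Site321 q k := by
  unfold S321
  rw [Finset.mem_filter, Finset.mem_range, Nat.lt_succ_iff]

lemma ins321_avoid (hq : q ~ List.range m) (hkle : k ≤ q.length) (hsite : Site321 q k)
    (hav : ¬C321 q) : ¬C321 (insertIdx k m q) := by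
  have hm : q.length = m := perm_length hq
  rintro ⟨i, j, kk, hij, hjk, hkk, h1, h2⟩
  rw [length_insertIdx' hkle] at hkk
  have hent : ∀ x, x < q.length + 1 → x ≠ k → ent (insertIdx k m q) x =
      ent q (if x < k then x else x - 1) := by
    intro x hx hne
    rcases lt_or_gt_of_ne hne with h | h
    · rw [if_pos h]; exact ent_insertIdx_lt hkle h
    · rw [if_neg (by omega)]; exact ent_insertIdx_gt hkle h hx
  have hlt : ∀ x, x < q.length → ent q x < m := fun x hx => ent_lt_of_perm hq hx
  rcases eq_or_ne j k with rfl | hj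
  · -- ent j = m, but h1 : ent j < ent i where ent i < m
    rw [ent_insertIdx_self hkle] at h1
    rw [hent i (by omega) (by omega)] at h1
    have := hlt _ (show (if i < j then i else i - 1) < q.length by split_ifs <;> omega)
    omega
  rcases eq_or_ne kk k with rfl | hkkne
  · rw [ent_insertIdx_self hkle] at h2
    rw [hent j (by omega) hj] at h2
    have := hlt _ (show (if j < kk then j else j - 1) < q.length by split_ifs <;> omega)
    omega
  rcases eq_or_ne i k with rfl | hi
  · -- site condition violated: entries after k decreasing
    rw [hent j (by omega) hj, hent kk hkk hkkne] at h2
    have h3 := hsite (if j < i then j else j - 1) (if kk < i then kk else kk - 1)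
      (by split_ifs <;> omega) (by split_ifs <;> omega) (by split_ifs <;> omega)
    omega
  · rw [hent j (by omega) hj, hent i (by omega) hi] at h1
    rw [hent kk hkk hkkne, hent j (by omega) hj] at h2
    exact hav ⟨_, _, _, show (if i < k then i else i - 1) < (if j < k then j else j - 1) by
        split_ifs <;> omega,
      show (if j < k then j else j - 1) < (if kk < k then kk else kk - 1) by
        split_ifs <;> omega,
      by split_ifs <;> omega, h1, h2⟩

lemma erase321_avoid (hq : q ~ List.range m) (hkle : k ≤ q.length)
    (hav : ¬C321 (insertIdx k m q)) : ¬C321 q := by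
  rintro ⟨i, j, kk, hij, hjk, hkk, h1, h2⟩
  have hent : ∀ x, x < q.length → ent (insertIdx k m q) (if x < k then x else x + 1) = ent q x := by
    intro x hx
    split
    · exact ent_insertIdx_lt hkle (by omega)
    · rw [ent_insertIdx_gt hkle (by omega) (by omega)]; simp
  refine hav ⟨(if i < k then i else i + 1), (if j < k then j else j + 1),
    (if kk < k then kk else kk + 1), ?_, ?_, ?_, ?_, ?_⟩
  · split_ifs <;> omega
  · split_ifs <;> omega
  · rw [length_insertIdx' hkle]; split_ifs <;> omega
  · rw [hent i (by omega), hent j (by omega)]; exact h1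
  · rw [hent kk (by omega), hent j (by omega)]; exact h2

lemma erase321_site (hq : q ~ List.range m) (hkle : k ≤ q.length)
    (hav : ¬C321 (insertIdx k m q)) : Site321 q k := by
  intro i j hki hij hj
  have hnd : q.Nodup := perm_nodup hq
  have hne : ent q i ≠ ent q j := ent_ne hnd (by omega) hj (by omega)
  rcases lt_or_gt_of_ne hne with h | h
  · exact h
  exfalso
  refine hav ⟨k, i + 1, j + 1, by omega, by omega, ?_, ?_, ?_⟩
  · rw [length_insertIdx' hkle]; omega
  · rw [ent_insertIdx_gt hkle (by omega) (by omega), ent_insertIdx_self hkle]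
    simpa using ent_lt_of_perm hq (show i < q.length by omega)
  · rw [ent_insertIdx_gt hkle (by omega) (by omega), ent_insertIdx_gt hkle (by omega) (by omega)]
    simpa using h

lemma len_mem_S321 : q.length ∈ S321 q :=
  mem_S321.2 ⟨le_refl _, fun i j hi hij hj => by omega⟩

lemma S321_card_pos : 0 < (S321 q).card := Finset.card_pos.2 ⟨q.length, len_mem_S321⟩

lemma S321_eq_Icc (hq : q ~ List.range m) :
    S321 q = Finset.Icc (q.length + 1 - (S321 q).card) q.length := by
  have hmono : ∀ k k', k ∈ S321 q → k ≤ k' → k' ≤ q.length → k' ∈ S321 q := by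
    intro k k' hk hkk' hk'
    obtain ⟨_, hsite⟩ := mem_S321.1 hk
    exact mem_S321.2 ⟨hk', fun i j hi hij hj => hsite i j (by omega) hij hj⟩
  have hsub : S321 q ⊆ Finset.Icc (q.length + 1 - (S321 q).card) q.length := by
    intro k hk
    have hk1 : k ≤ q.length := (mem_S321.1 hk).1
    have hicc : Finset.Icc k q.length ⊆ S321 q := by
      intro x hx
      rw [Finset.mem_Icc] at hx
      exact hmono k x hk hx.1 hx.2
    have := Finset.card_le_card hicc
    rw [Nat.card_Icc] at this
    rw [Finset.mem_Icc]
    omega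
  have hcard : (Finset.Icc (q.length + 1 - (S321 q).card) q.length).card ≤ (S321 q).card := by
    rw [Nat.card_Icc]
    omega
  exact Finset.eq_of_subset_of_card_le hsub hcard

lemma S321_card_le : (S321 q).card ≤ q.length + 1 := by
  have : S321 q ⊆ Finset.range (q.length + 1) := Finset.filter_subset _ _
  simpa using Finset.card_le_card this

lemma sites321_insert (hq : q ~ List.range m) (hkmem : k ∈ S321 q) :
    S321 (insertIdx k m q) =
      if k = q.length then insert (q.length + 1) (S321 q)
      else Finset.Icc (k + 1) (q.length + 1) := by
  obtain ⟨hkle, hsite⟩ := mem_S321.1 hkmem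
  have hm : q.length = m := perm_length hq
  have hlen : (insertIdx k m q).length = q.length + 1 := length_insertIdx' hkle
  have hlt : ∀ x, x < q.length → ent q x < m := fun x hx => ent_lt_of_perm hq hx
  split_ifs with hkq
  · -- k = length: append at the end
    subst hkq
    ext k'
    rw [mem_S321, hlen]
    simp only [Finset.mem_insert]
    constructor
    · rintro ⟨hle, hs⟩
      rcases eq_or_ne k' (q.length + 1) with rfl | hne
      · exact Or.inl rfl
      · right
        refine mem_S321.2 ⟨by omega, fun i j hi hij hj => ?_⟩
        have := hs i j hi hij (by omega)
        rwa [ent_insertIdx_lt hkle (by omega), ent_insertIdx_lt hkle (by omega)] at this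
    · rintro (rfl | hmem)
      · exact ⟨le_refl _, fun i j hi hij hj => by omega⟩
      · obtain ⟨hle, hs⟩ := mem_S321.1 hmem
        refine ⟨by omega, fun i j hi hij hj => ?_⟩
        rcases eq_or_ne j q.length with rfl | hj'
        · rw [ent_insertIdx_self hkle, ent_insertIdx_lt hkle (by omega)]
          exact hlt i (by omega)
        · rw [ent_insertIdx_lt hkle (by omega), ent_insertIdx_lt hkle (by omega)]
          exact hs i j hi hij (by omega)
  · -- k < length
    have hklt : k < q.length := by omega
    ext k'
    rw [mem_S321, hlen, Finset.mem_Icc]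
    constructor
    · rintro ⟨hle, hs⟩
      refine ⟨?_, hle⟩
      by_contra hcon
      push_neg at hcon
      have := hs k (k + 1) (by omega) (by omega) (by omega)
      rw [ent_insertIdx_self hkle, ent_insertIdx_gt hkle (by omega) (by omega)] at this
      simp only [Nat.add_sub_cancel] at this
      have := hlt k hklt
      omega
    · rintro ⟨h1, h2⟩
      refine ⟨h2, fun i j hi hij hj => ?_⟩
      rw [ent_insertIdx_gt hkle (by omega) (by omega), ent_insertIdx_gt hkle (by omega) (by omega)]
      exact hsite (i - 1) (j - 1) (by omega) (by omega) (by omega)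

lemma card_sites321_insert (hq : q ~ List.range m) (hkmem : k ∈ S321 q) :
    (S321 (insertIdx k m q)).card = lab321 q k := by
  rw [sites321_insert hq hkmem, lab321]
  obtain ⟨hkle, _⟩ := mem_S321.1 hkmem
  split_ifs with hkq
  · rw [Finset.card_insert_of_notMem (by
      intro hmem
      have := (mem_S321.1 hmem).1
      omega)]
  · rw [Nat.card_Icc]
    omega

lemma lab321_ge (hq : q ~ List.range m) (hkmem : k ∈ S321 q) : 2 ≤ lab321 q k := by
  obtain ⟨hkle, _⟩ := mem_S321.1 hkmem
  unfold lab321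
  have := S321_card_pos (q := q)
  split_ifs with h
  · omega
  · omega

lemma lab321_le (hq : q ~ List.range m) (hkmem : k ∈ S321 q) :
    lab321 q k ≤ (S321 q).card + 1 := by
  have hicc := S321_eq_Icc hq
  have hk2 := hkmem
  rw [hicc, Finset.mem_Icc] at hk2
  unfold lab321
  split_ifs with h
  · omega
  · omega

lemma uniq321 (hq : q ~ List.range m) (t : ℕ) (h2 : 2 ≤ t) (hle : t ≤ (S321 q).card + 1) :
    ∃! k, k ∈ S321 q ∧ lab321 q k = t := by
  have hicc := S321_eq_Icc hq
  have hcard := S321_card_le (q := q)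
  have hpos := S321_card_pos (q := q)
  set s := (S321 q).card with hs
  rcases eq_or_ne t (s + 1) with rfl | hne
  · refine ⟨q.length, ⟨len_mem_S321, by simp [lab321, hs]⟩, ?_⟩
    rintro y ⟨hy, hy2⟩
    by_contra hyne
    have hy3 := hy
    rw [hicc, Finset.mem_Icc] at hy3
    rw [lab321, if_neg hyne] at hy2
    omega
  · -- t ≤ s
    have ht : t ≤ s := by omega
    refine ⟨q.length + 1 - t, ⟨?_, ?_⟩, ?_⟩
    · rw [hicc, Finset.mem_Icc]
      omega
    · rw [lab321, if_neg (by omega)]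
      omega
    · rintro y ⟨hy, hy2⟩
      have hy3 := hy
      rw [hicc, Finset.mem_Icc] at hy3
      rcases eq_or_ne y q.length with rfl | hyne
      · rw [lab321, if_pos rfl] at hy2
        omega
      · rw [lab321, if_neg hyne] at hy2
        omega

end Class321


section Generic

variable (C : List ℕ → Prop) (S : List ℕ → Finset ℕ) (lab : List ℕ → ℕ → ℕ)

noncomputable def NN (n t : ℕ) : ℕ :=
  ((perms n).filter (fun l => ¬C l ∧ (S l).card = t)).card

structure Good : Prop where
  smem : ∀ (l : List ℕ) (k : ℕ), k ∈ S l → k ≤ l.length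
  scard_le : ∀ (l : List ℕ), (S l).card ≤ l.length + 1
  ins_avoid : ∀ (m : ℕ) (q : List ℕ) (k : ℕ), q ~ List.range m → ¬C q → k ∈ S q →
    ¬C (insertIdx k m q)
  erase_avoid : ∀ (m : ℕ) (l : List ℕ), l ~ List.range (m + 1) → ¬C l →
    ¬C (l.eraseIdx (l.idxOf m))
  erase_site : ∀ (m : ℕ) (l : List ℕ), l ~ List.range (m + 1) → ¬C l →
    l.idxOf m ∈ S (l.eraseIdx (l.idxOf m))
  lab_card : ∀ (m : ℕ) (q : List ℕ) (k : ℕ), q ~ List.range m → ¬C q → k ∈ S q →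
    (S (insertIdx k m q)).card = lab q k
  lab_ge : ∀ (m : ℕ) (q : List ℕ) (k : ℕ), q ~ List.range m → ¬C q → k ∈ S q → 2 ≤ lab q k
  lab_le : ∀ (m : ℕ) (q : List ℕ) (k : ℕ), q ~ List.range m → ¬C q → k ∈ S q →
    lab q k ≤ (S q).card + 1
  uniq : ∀ (m : ℕ) (q : List ℕ) (t : ℕ), q ~ List.range m → ¬C q → 2 ≤ t →
    t ≤ (S q).card + 1 → ∃! k, k ∈ S q ∧ lab q k = t
  empty_avoid : ¬C []
  empty_scard : (S []).card = 1

noncomputable def pick (q : List ℕ) (t : ℕ) : ℕ :=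
  if h : ∃ k, k ∈ S q ∧ lab q k = t then h.choose else 0

lemma pick_spec {q : List ℕ} {t : ℕ} (h : ∃ k, k ∈ S q ∧ lab q k = t) :
    pick S lab q t ∈ S q ∧ lab q (pick S lab q t) = t := by
  rw [pick, dif_pos h]
  exact h.choose_spec

variable {C S lab}

lemma NN_succ (hg : Good C S lab) (n t : ℕ) (ht : 2 ≤ t) :
    NN C S (n + 1) t = ((perms n).filter (fun q => ¬C q ∧ t ≤ (S q).card + 1)).card := by
  apply Finset.card_bij' (fun l _ => l.eraseIdx (l.idxOf n))
    (fun q _ => insertIdx (pick S lab q t) n q)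
  · -- hi : forward maps into target
    intro l hl
    rw [Finset.mem_filter] at hl ⊢
    obtain ⟨hlp, hav, hcard⟩ := hl
    rw [mem_perms] at hlp
    have hqperm := eraseIdx_indexOf_perm hlp
    have hqav := hg.erase_avoid n l hlp hav
    have hk0 := hg.erase_site n l hlp hav
    have hrec := insertIdx_indexOf_eraseIdx hlp
    have hlab : lab (l.eraseIdx (l.idxOf n)) (l.idxOf n) = t := by
      have := hg.lab_card n _ _ hqperm hqav hk0
      rw [hrec] at this
      omega
    have hle := hg.lab_le n _ _ hqperm hqav hk0
    exact ⟨mem_perms.2 hqperm, hqav, by omega⟩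
  · -- hj : backward maps into source
    intro q hq
    rw [Finset.mem_filter] at hq ⊢
    obtain ⟨hqp, hav, hle⟩ := hq
    rw [mem_perms] at hqp
    obtain ⟨hpk, hplab⟩ := pick_spec S lab (hg.uniq n q t hqp hav ht hle).exists
    have hkle : pick S lab q t ≤ q.length := hg.smem q _ hpk
    refine ⟨mem_perms.2 (insertIdx_perm hqp hkle), hg.ins_avoid n q _ hqp hav hpk, ?_⟩
    rw [hg.lab_card n q _ hqp hav hpk, hplab]
  · -- left inverse
    intro l hl
    rw [Finset.mem_filter] at hl
    obtain ⟨hlp, hav, hcard⟩ := hl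
    rw [mem_perms] at hlp
    have hqperm := eraseIdx_indexOf_perm hlp
    have hqav := hg.erase_avoid n l hlp hav
    have hk0 := hg.erase_site n l hlp hav
    have hrec := insertIdx_indexOf_eraseIdx hlp
    have hlab : lab (l.eraseIdx (l.idxOf n)) (l.idxOf n) = t := by
      have := hg.lab_card n _ _ hqperm hqav hk0
      rw [hrec] at this
      omega
    have hle := hg.lab_le n _ _ hqperm hqav hk0
    have huniq := hg.uniq n _ t hqperm hqav ht (by omega)
    obtain ⟨hpk, hplab⟩ := pick_spec S lab huniq.exists
    have : pick S lab (l.eraseIdx (l.idxOf n)) t = l.idxOf n := by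
      obtain ⟨k', _, huni⟩ := huniq
      rw [huni _ ⟨hpk, hplab⟩, huni _ ⟨hk0, hlab⟩]
    rw [this, hrec]
  · -- right inverse
    intro q hq
    rw [Finset.mem_filter] at hq
    obtain ⟨hqp, hav, hle⟩ := hq
    rw [mem_perms] at hqp
    obtain ⟨hpk, _⟩ := pick_spec S lab (hg.uniq n q t hqp hav ht hle).exists
    have hkle : pick S lab q t ≤ q.length := hg.smem q _ hpk
    have hnmem : n ∉ q := fun h => by simpa using hqp.mem_iff.1 h
    rw [indexOf_insertIdx hnmem hkle, eraseIdx_insertIdx' hkle]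

lemma NN_succ_small (hg : Good C S lab) (n t : ℕ) (ht : t < 2) : NN C S (n + 1) t = 0 := by
  rw [NN, Finset.card_eq_zero]
  rw [Finset.filter_eq_empty_iff]
  rintro l hl ⟨hav, hcard⟩
  rw [mem_perms] at hl
  have hqperm := eraseIdx_indexOf_perm hl
  have hqav := hg.erase_avoid n l hl hav
  have hk0 := hg.erase_site n l hl hav
  have hrec := insertIdx_indexOf_eraseIdx hl
  have := hg.lab_card n _ _ hqperm hqav hk0
  rw [hrec] at this
  have := hg.lab_ge n _ _ hqperm hqav hk0
  omega

lemma sum_fibers (hg : Good C S lab) (n c : ℕ) :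
    ((perms n).filter (fun q => ¬C q ∧ c ≤ (S q).card + 1)).card
      = ∑ t' ∈ (Finset.range (n + 2)).filter (fun t' => c ≤ t' + 1), NN C S n t' := by
  rw [Finset.card_eq_sum_card_fiberwise (f := fun q => (S q).card)
    (t := (Finset.range (n + 2)).filter (fun t' => c ≤ t' + 1))]
  · apply Finset.sum_congr rfl
    intro b hb
    rw [Finset.mem_filter, Finset.mem_range] at hb
    rw [NN, Finset.filter_filter]
    congr 1
    apply Finset.filter_congr
    intro q hq
    constructor
    · rintro ⟨⟨h1, _⟩, h3⟩; exact ⟨h1, h3⟩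
    · rintro ⟨h1, h3⟩; exact ⟨⟨h1, by omega⟩, h3⟩
  · intro q hq
    rw [Finset.mem_coe, Finset.mem_filter] at hq
    obtain ⟨hqp, _, hle⟩ := hq
    rw [mem_perms] at hqp
    have h1 := hg.scard_le q
    have h2 := perm_length hqp
    rw [Finset.mem_coe, Finset.mem_filter, Finset.mem_range]
    beta_reduce
    exact ⟨by omega, hle⟩

lemma sum_total (hg : Good C S lab) (n : ℕ) :
    ((perms n).filter (fun q => ¬C q)).card = ∑ t' ∈ Finset.range (n + 2), NN C S n t' := by
  rw [Finset.card_eq_sum_card_fiberwise (f := fun q => (S q).card)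
    (t := Finset.range (n + 2))]
  · apply Finset.sum_congr rfl
    intro b _
    rw [NN, Finset.filter_filter]
  · intro q hq
    rw [Finset.mem_coe, Finset.mem_filter] at hq
    obtain ⟨hqp, _⟩ := hq
    rw [mem_perms] at hqp
    have h1 := hg.scard_le q
    have h2 := perm_length hqp
    rw [Finset.mem_coe, Finset.mem_range]
    beta_reduce
    omega

lemma NN_zero (hg : Good C S lab) (t : ℕ) : NN C S 0 t = if t = 1 then 1 else 0 := by
  have hperms : perms 0 = {([] : List ℕ)} := by
    rw [perms]
    simp
  rw [NN, hperms, Finset.filter_singleton]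
  have h1 := hg.empty_avoid
  have h2 := hg.empty_scard
  split_ifs with h h' h'
  · rfl
  · exact absurd (h.2) (by omega)
  · exact absurd ⟨h1, by omega⟩ h
  · rfl

end Generic


section Instances

lemma empty_no132 : ¬C132 [] := by
  rintro ⟨i, j, k, _, _, h, _⟩
  simp at h

lemma empty_no321 : ¬C321 [] := by
  rintro ⟨i, j, k, _, _, h, _⟩
  simp at h

lemma S132_empty : S132 [] = {0} := by
  ext k
  rw [mem_S132]
  simp only [List.length_nil, Nat.le_zero, Finset.mem_singleton]
  constructor
  · rintro ⟨h, _⟩; exact h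
  · rintro rfl
    exact ⟨rfl, fun i j hi hj hlen => by simp at hlen⟩

lemma S321_empty : S321 [] = {0} := by
  ext k
  rw [mem_S321]
  simp only [List.length_nil, Nat.le_zero, Finset.mem_singleton]
  constructor
  · rintro ⟨h, _⟩; exact h
  · rintro rfl
    exact ⟨rfl, fun i j hi hj hlen => by simp at hlen⟩

lemma S132_card_le (l : List ℕ) : (S132 l).card ≤ l.length + 1 := by
  have : S132 l ⊆ Finset.range (l.length + 1) := Finset.filter_subset _ _
  simpa using Finset.card_le_card this

lemma good132 : Good C132 S132 lab132 := by
  constructor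
  · intro l k hk; exact (mem_S132.1 hk).1
  · exact S132_card_le
  · intro m q k hq hav hk
    obtain ⟨h1, h2⟩ := mem_S132.1 hk
    exact ins132_avoid hq h1 h2 hav
  · intro m l hl hav
    have hqperm := eraseIdx_indexOf_perm hl
    have hkle : l.idxOf m ≤ (l.eraseIdx (l.idxOf m)).length := by
      have := indexOf_le hl
      have := perm_length hqperm
      omega
    have hrec := insertIdx_indexOf_eraseIdx hl
    apply erase132_avoid hqperm hkle
    rwa [hrec]
  · intro m l hl hav
    have hqperm := eraseIdx_indexOf_perm hl
    have hkle : l.idxOf m ≤ (l.eraseIdx (l.idxOf m)).length := by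
      have := indexOf_le hl
      have := perm_length hqperm
      omega
    have hrec := insertIdx_indexOf_eraseIdx hl
    refine mem_S132.2 ⟨hkle, erase132_site hqperm hkle ?_⟩
    rwa [hrec]
  · intro m q k hq hav hk
    exact card_sites132_insert hq hk
  · intro m q k hq hav hk
    exact lab132_ge hk
  · intro m q k hq hav hk
    exact lab132_le hk
  · intro m q t hq hav h2 hle
    exact uniq132 t h2 hle
  · exact empty_no132
  · rw [S132_empty]; rfl

lemma good321 : Good C321 S321 lab321 := by
  constructor
  · intro l k hk; exact (mem_S321.1 hk).1
  · intro l; exact S321_card_le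
  · intro m q k hq hav hk
    obtain ⟨h1, h2⟩ := mem_S321.1 hk
    exact ins321_avoid hq h1 h2 hav
  · intro m l hl hav
    have hqperm := eraseIdx_indexOf_perm hl
    have hkle : l.idxOf m ≤ (l.eraseIdx (l.idxOf m)).length := by
      have := indexOf_le hl
      have := perm_length hqperm
      omega
    have hrec := insertIdx_indexOf_eraseIdx hl
    apply erase321_avoid hqperm hkle
    rwa [hrec]
  · intro m l hl hav
    have hqperm := eraseIdx_indexOf_perm hl
    have hkle : l.idxOf m ≤ (l.eraseIdx (l.idxOf m)).length := by
      have := indexOf_le hl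
      have := perm_length hqperm
      omega
    have hrec := insertIdx_indexOf_eraseIdx hl
    refine mem_S321.2 ⟨hkle, erase321_site hqperm hkle ?_⟩
    rwa [hrec]
  · intro m q k hq hav hk
    exact card_sites321_insert hq hk
  · intro m q k hq hav hk
    exact lab321_ge hq hk
  · intro m q k hq hav hk
    exact lab321_le hq hk
  · intro m q t hq hav h2 hle
    exact uniq321 hq t h2 hle
  · exact empty_no321
  · rw [S321_empty]; rfl

lemma NN_eq : ∀ n t : ℕ, NN C132 S132 n t = NN C321 S321 n t := by
  intro n
  induction n with
  | zero =>
      intro t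
      rw [NN_zero good132, NN_zero good321]
  | succ n ih =>
      intro t
      rcases lt_or_ge t 2 with ht | ht
      · rw [NN_succ_small good132 n t ht, NN_succ_small good321 n t ht]
      · rw [NN_succ good132 n t ht, NN_succ good321 n t ht,
          sum_fibers good132 n t, sum_fibers good321 n t]
        exact Finset.sum_congr rfl fun t' _ => ih t'

lemma lists_eq (n : ℕ) :
    ((perms n).filter (fun l => ¬C321 l)).card = ((perms n).filter (fun l => ¬C132 l)).card := by
  rw [sum_total good321, sum_total good132]
  exact Finset.sum_congr rfl fun t _ => (NN_eq n t).symm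

end Instances

section Bridge

variable {n : ℕ}

noncomputable def toList (π : Equiv.Perm (Fin n)) : List ℕ := List.ofFn (fun i => (π i : ℕ))

lemma toList_length (π : Equiv.Perm (Fin n)) : (toList π).length = n := by
  simp [toList]

lemma ent_toList (π : Equiv.Perm (Fin n)) (i : ℕ) (h : i < n) :
    ent (toList π) i = π ⟨i, h⟩ := by
  rw [ent_eq_getElem (by rw [toList_length]; exact h)]
  simp [toList]

lemma toList_perm (π : Equiv.Perm (Fin n)) : toList π ~ List.range n := by
  apply List.perm_of_nodup_nodup_toFinset_eq
  · exact List.nodup_ofFn.2 (Fin.val_injective.comp π.injective)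
  · exact List.nodup_range
  · ext x
    simp only [List.mem_toFinset, toList, List.mem_ofFn, List.mem_range]
    constructor
    · rintro ⟨i, rfl⟩; exact (π i).2
    · intro hx
      exact ⟨π.symm ⟨x, hx⟩, by simp⟩

lemma avoids132_iff (π : Equiv.Perm (Fin n)) : Avoids132 π ↔ ¬C132 (toList π) := by
  unfold Avoids132 C132
  constructor
  · intro h hcon
    obtain ⟨i, j, k, hij, hjk, hk, h1, h2⟩ := hcon
    rw [toList_length] at hk
    have hj : j < n := by omega
    have hi : i < n := by omega
    rw [ent_toList π i hi, ent_toList π k hk] at h1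
    rw [ent_toList π k hk, ent_toList π j hj] at h2
    exact h ⟨⟨i, hi⟩, ⟨j, hj⟩, ⟨k, hk⟩, hij, hjk, h1, h2⟩
  · intro h hcon
    obtain ⟨i, j, k, hij, hjk, h1, h2⟩ := hcon
    refine h ⟨i.1, j.1, k.1, hij, hjk, ?_, ?_, ?_⟩
    · rw [toList_length]; exact k.2
    · rw [ent_toList π i.1 i.2, ent_toList π k.1 k.2]
      exact h1
    · rw [ent_toList π k.1 k.2, ent_toList π j.1 j.2]
      exact h2

lemma avoids321_iff (π : Equiv.Perm (Fin n)) : Avoids321 π ↔ ¬C321 (toList π) := by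
  unfold Avoids321 C321
  constructor
  · intro h hcon
    obtain ⟨i, j, k, hij, hjk, hk, h1, h2⟩ := hcon
    rw [toList_length] at hk
    have hj : j < n := by omega
    have hi : i < n := by omega
    rw [ent_toList π j hj, ent_toList π i hi] at h1
    rw [ent_toList π k hk, ent_toList π j hj] at h2
    exact h ⟨⟨i, hi⟩, ⟨j, hj⟩, ⟨k, hk⟩, hij, hjk, h2, h1⟩
  · intro h hcon
    obtain ⟨i, j, k, hij, hjk, h1, h2⟩ := hcon
    refine h ⟨i.1, j.1, k.1, hij, hjk, ?_, ?_, ?_⟩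
    · rw [toList_length]; exact k.2
    · rw [ent_toList π j.1 j.2, ent_toList π i.1 i.2]
      exact h2
    · rw [ent_toList π k.1 k.2, ent_toList π j.1 j.2]
      exact h1

lemma card_bridge (A : Equiv.Perm (Fin n) → Prop) (Cl : List ℕ → Prop)
    (hiff : ∀ π, A π ↔ ¬Cl (toList π)) :
    Nat.card {π : Equiv.Perm (Fin n) // A π} = ((perms n).filter (fun l => ¬Cl l)).card := by
  rw [Nat.card_eq_fintype_card, Fintype.card_subtype]
  apply Finset.card_bij (fun π _ => toList π)
  · intro π hπ
    rw [Finset.mem_filter] at hπ ⊢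
    exact ⟨mem_perms.2 (toList_perm π), (hiff π).1 hπ.2⟩
  · intro π _ π' _ h
    have := List.ofFn_injective h
    ext i
    exact congrFun this i
  · intro l hl
    rw [Finset.mem_filter, mem_perms] at hl
    obtain ⟨hlp, hav⟩ := hl
    have hlen : l.length = n := perm_length hlp
    have hnd : l.Nodup := perm_nodup hlp
    set f : Fin n → Fin n := fun i => ⟨ent l i.1, ent_lt_of_perm hlp (by omega)⟩ with hf
    have hinj : Function.Injective f := by
      intro i j hij
      have : ent l i.1 = ent l j.1 := congrArg Fin.val hij
      by_contra hne
      exact ent_ne hnd (by omega) (by omega) (fun h => hne (Fin.val_injective h)) this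
    obtain ⟨π, hπ⟩ : ∃ π : Equiv.Perm (Fin n), ∀ i, π i = f i :=
      ⟨Equiv.ofBijective f (Finite.injective_iff_bijective.1 hinj), fun i => rfl⟩
    have htl : toList π = l := by
      apply List.ext_getElem (by rw [toList_length, hlen])
      intro i h1 h2
      rw [toList_length] at h1
      have : (toList π)[i] = ent (toList π) i := (ent_eq_getElem (by rw [toList_length]; exact h1)).symm
      rw [this, ent_toList π i h1, hπ ⟨i, h1⟩]
      exact (ent_eq_getElem h2).symm ▸ rfl
    refine ⟨π, Finset.mem_filter.2 ⟨Finset.mem_univ _, ?_⟩, htl⟩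
    rw [hiff, htl]
    exact hav

end Bridge

end AvCount

/-- The number of 321-avoiding permutations of `{1,...,n}` equals the number of
132-avoiding permutations of `{1,...,n}`. -/
theorem card_avoids321_eq_card_avoids132 (n : ℕ) :
    Nat.card {π : Equiv.Perm (Fin n) // Avoids321 π} =
      Nat.card {π : Equiv.Perm (Fin n) // Avoids132 π} := by
  rw [AvCount.card_bridge Avoids321 AvCount.C321 AvCount.avoids321_iff,
    AvCount.card_bridge Avoids132 AvCount.C132 AvCount.avoids132_iff]
  exact AvCount.lists_eq n
end

section
/- For 1 ≤ k ≤ n, the number of 321-avoiding permutations of {1,...,n} with exactly k left-to-right maxima is the Narayana number (1/n)·C(n,k)·C(n,k−1). -/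
open Finset

def IsLRMax {n : ℕ} (π : Equiv.Perm (Fin n)) (i : Fin n) : Prop :=
  ∀ j : Fin n, j < i → π j < π i

namespace N321


/-- number of elements of `A` below `t` -/
def cnt (A : Finset ℕ) (t : ℕ) : ℕ := #(A.filter (fun x => x < t))

lemma cnt_zero (A : Finset ℕ) : cnt A 0 = 0 := by simp [cnt]

lemma cnt_mono (A : Finset ℕ) {s t : ℕ} (h : s ≤ t) : cnt A s ≤ cnt A t := by
  apply card_le_card
  intro x hx
  simp only [mem_filter] at hx ⊢
  exact ⟨hx.1, lt_of_lt_of_le hx.2 h⟩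

lemma cnt_succ_le (A : Finset ℕ) (s : ℕ) : cnt A (s+1) ≤ cnt A s + 1 := by
  have h : A.filter (fun x => x < s + 1) ⊆ insert s (A.filter (fun x => x < s)) := by
    intro x hx
    simp only [mem_filter] at hx
    rcases Nat.lt_succ_iff_lt_or_eq.1 hx.2 with h' | h'
    · exact mem_insert_of_mem (mem_filter.2 ⟨hx.1, h'⟩)
    · simp [h']
  calc cnt A (s+1) ≤ #(insert s (A.filter (fun x => x < s))) := card_le_card h
    _ ≤ cnt A s + 1 := card_insert_le _ _

lemma cnt_eq_card {A : Finset ℕ} {m : ℕ} (h : A ⊆ range m) : cnt A m = #A := by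
  rw [cnt, filter_true_of_mem]
  intro x hx; exact mem_range.1 (h hx)

lemma cnt_succ_of_not_mem {A : Finset ℕ} {t : ℕ} (h : t ∉ A) : cnt A (t+1) = cnt A t := by
  unfold cnt
  congr 1
  ext x
  simp only [mem_filter, Nat.lt_succ_iff]
  constructor
  · rintro ⟨hx, hle⟩
    refine ⟨hx, lt_of_le_of_ne hle ?_⟩
    rintro rfl; exact h hx
  · rintro ⟨hx, hlt⟩; exact ⟨hx, le_of_lt hlt⟩

/-- swap the prefixes below `t` of `A` and `B` -/
def swapAt (A B : Finset ℕ) (t : ℕ) : Finset ℕ × Finset ℕ :=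
  (B.filter (fun x => x < t) ∪ A.filter (fun x => ¬ x < t),
   A.filter (fun x => x < t) ∪ B.filter (fun x => ¬ x < t))

lemma swapAt_snd (A B : Finset ℕ) (t : ℕ) : (swapAt A B t).2 = (swapAt B A t).1 := rfl

lemma swapAt_swapAt (A B : Finset ℕ) (t : ℕ) :
    swapAt (swapAt A B t).1 (swapAt A B t).2 t = (A, B) := by
  unfold swapAt
  refine Prod.ext ?_ ?_ <;>
  · ext x
    by_cases hx : x < t
    · have ht : ¬ t ≤ x := by omega
      simp [hx, ht]
    · have ht : t ≤ x := by omega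
      simp [hx, ht]

lemma cnt_swapAt_fst_of_le (A B : Finset ℕ) {s t : ℕ} (hs : s ≤ t) :
    cnt (swapAt A B t).1 s = cnt B s := by
  unfold cnt swapAt
  congr 1
  ext x
  simp only [mem_filter, mem_union]
  constructor
  · rintro ⟨⟨hB, _⟩ | ⟨_, hge⟩, hxs⟩
    · exact ⟨hB, hxs⟩
    · omega
  · rintro ⟨hB, hxs⟩; exact ⟨Or.inl ⟨hB, lt_of_lt_of_le hxs hs⟩, hxs⟩

lemma filter_swapAt_fst_of_ge (A B : Finset ℕ) {s t : ℕ} (ht : t ≤ s) :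
    (swapAt A B t).1.filter (fun x => x < s)
      = B.filter (fun x => x < t) ∪ A.filter (fun x => ¬ x < t ∧ x < s) := by
  unfold swapAt
  ext x
  simp only [mem_filter, mem_union]
  constructor
  · rintro ⟨⟨hB, hlt⟩ | ⟨hA, hge⟩, hxs⟩
    · exact Or.inl ⟨hB, hlt⟩
    · exact Or.inr ⟨hA, hge, hxs⟩
  · rintro (⟨hB, hlt⟩ | ⟨hA, hge, hxs⟩)
    · exact ⟨Or.inl ⟨hB, hlt⟩, lt_of_lt_of_le hlt ht⟩
    · exact ⟨Or.inr ⟨hA, hge⟩, hxs⟩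

lemma cnt_swapAt_fst_of_ge (A B : Finset ℕ) {s t : ℕ} (ht : t ≤ s) :
    cnt (swapAt A B t).1 s + cnt A t = cnt B t + cnt A s := by
  have hd : Disjoint (B.filter (fun x => x < t)) (A.filter (fun x => ¬ x < t ∧ x < s)) := by
    rw [disjoint_left]; intro x hx hx'
    simp only [mem_filter] at hx hx'
    omega
  have hA : A.filter (fun x => x < s)
      = A.filter (fun x => x < t) ∪ A.filter (fun x => ¬ x < t ∧ x < s) := by
    ext x
    simp only [mem_filter, mem_union]
    constructor
    · rintro ⟨hx, hxs⟩
      by_cases h : x < t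
      · exact Or.inl ⟨hx, h⟩
      · exact Or.inr ⟨hx, h, hxs⟩
    · rintro (⟨hx, h⟩ | ⟨hx, _, hxs⟩)
      · exact ⟨hx, lt_of_lt_of_le h ht⟩
      · exact ⟨hx, hxs⟩
  have hd2 : Disjoint (A.filter (fun x => x < t)) (A.filter (fun x => ¬ x < t ∧ x < s)) := by
    rw [disjoint_left]; intro x hx hx'
    simp only [mem_filter] at hx hx'
    omega
  unfold cnt
  rw [filter_swapAt_fst_of_ge A B ht, card_union_of_disjoint hd, hA, card_union_of_disjoint hd2]
  ring

lemma card_swapAt_fst (A B : Finset ℕ) (t : ℕ) :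
    #(swapAt A B t).1 + cnt A t = cnt B t + #A := by
  have h1 : #(swapAt A B t).1
      = #(B.filter (fun x => x < t)) + #(A.filter (fun x => ¬ x < t)) := by
    apply card_union_of_disjoint
    rw [disjoint_left]; intro x hx hx'
    simp only [mem_filter] at hx hx'
    omega
  have h2 := card_filter_add_card_filter_not (s := A) (p := fun x => x < t)
  unfold cnt
  omega

lemma swapAt_fst_subset {A B : Finset ℕ} {m t : ℕ} (hA : A ⊆ range m) (hB : B ⊆ range m) :
    (swapAt A B t).1 ⊆ range m :=
  union_subset ((filter_subset _ _).trans hB) ((filter_subset _ _).trans hA)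

/-- at the first crossing the counts differ by exactly one -/
lemma find_cross {A B : Finset ℕ} (h : ∃ t, cnt B t < cnt A t) :
    cnt A (Nat.find h) = cnt B (Nat.find h) + 1 := by
  have ht : cnt B (Nat.find h) < cnt A (Nat.find h) := Nat.find_spec h
  rcases Nat.eq_zero_or_pos (Nat.find h) with h0 | h0
  · rw [h0] at ht; simp [cnt_zero] at ht
  obtain ⟨s, hs⟩ : ∃ s, Nat.find h = s + 1 := ⟨Nat.find h - 1, by omega⟩
  have hmin : ¬ cnt B s < cnt A s := Nat.find_min h (by omega)
  have h1 := cnt_succ_le A s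
  have h2 : cnt B s ≤ cnt B (s + 1) := cnt_mono B (by omega)
  have ht' : cnt B (s + 1) < cnt A (s + 1) := hs ▸ ht
  rw [hs]
  omega

/-- core lemma: swapping at the first crossing produces a pair whose first crossing
(in the opposite direction) is at the same spot, and swapping back recovers the pair. -/
lemma reflect_core {A B : Finset ℕ} (h : ∃ t, cnt B t < cnt A t) :
    ∃ h' : ∃ t, cnt (swapAt A B (Nat.find h)).1 t < cnt (swapAt A B (Nat.find h)).2 t,
      Nat.find h' = Nat.find h := by
  set t₀ := Nat.find h with ht₀
  have hspec : cnt B t₀ < cnt A t₀ := Nat.find_spec h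
  have hQ : cnt (swapAt A B t₀).1 t₀ < cnt (swapAt A B t₀).2 t₀ := by
    rw [cnt_swapAt_fst_of_le A B (le_refl t₀),
      swapAt_snd, cnt_swapAt_fst_of_le B A (le_refl t₀)]
    exact hspec
  refine ⟨⟨t₀, hQ⟩, ?_⟩
  rw [Nat.find_eq_iff]
  refine ⟨hQ, ?_⟩
  intro s hs
  have h1 : cnt (swapAt A B t₀).1 s = cnt B s := cnt_swapAt_fst_of_le A B (le_of_lt hs)
  have h2 : cnt (swapAt A B t₀).2 s = cnt A s := by
    rw [swapAt_snd]; exact cnt_swapAt_fst_of_le B A (le_of_lt hs)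
  have hmin : ¬ cnt B s < cnt A s := Nat.find_min h hs
  omega



lemma swapAt_comm (A B : Finset ℕ) (t : ℕ) :
    swapAt A B t = ((swapAt B A t).2, (swapAt B A t).1) := rfl

lemma ex1 {p : Finset ℕ × Finset ℕ} (hp : ¬ ∀ t, cnt p.1 t ≤ cnt p.2 t) :
    ∃ t, cnt p.2 t < cnt p.1 t := by
  push_neg at hp
  exact hp

open scoped Classical in
lemma card_bad (m j : ℕ) (hj : 1 ≤ j) :
    #((powersetCard j (range m) ×ˢ powersetCard j (range m)).filter
        (fun p => ¬ ∀ t, cnt p.1 t ≤ cnt p.2 t))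
      = m.choose (j-1) * m.choose (j+1) := by
  have key : #((powersetCard j (range m) ×ˢ powersetCard j (range m)).filter
        (fun p => ¬ ∀ t, cnt p.1 t ≤ cnt p.2 t))
      = #(powersetCard (j-1) (range m) ×ˢ powersetCard (j+1) (range m)) := by
    have hmemS : ∀ p : Finset ℕ × Finset ℕ,
        p ∈ (powersetCard j (range m) ×ˢ powersetCard j (range m)).filter
          (fun p => ¬ ∀ t, cnt p.1 t ≤ cnt p.2 t) →
        (p.1 ⊆ range m ∧ #p.1 = j) ∧ (p.2 ⊆ range m ∧ #p.2 = j) ∧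
          ¬ ∀ t, cnt p.1 t ≤ cnt p.2 t := by
      intro p hp
      rw [mem_filter, mem_product, mem_powersetCard, mem_powersetCard] at hp
      exact ⟨hp.1.1, hp.1.2, hp.2⟩
    have hmemT : ∀ q : Finset ℕ × Finset ℕ,
        q ∈ powersetCard (j-1) (range m) ×ˢ powersetCard (j+1) (range m) →
        (q.1 ⊆ range m ∧ #q.1 = j - 1) ∧ (q.2 ⊆ range m ∧ #q.2 = j + 1) := by
      intro q hq
      rw [mem_product, mem_powersetCard, mem_powersetCard] at hq
      exact hq
    have ex2 : ∀ q : Finset ℕ × Finset ℕ,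
        q ∈ powersetCard (j-1) (range m) ×ˢ powersetCard (j+1) (range m) →
        ∃ t, cnt q.1 t < cnt q.2 t := by
      intro q hq
      obtain ⟨⟨h1s, h1c⟩, h2s, h2c⟩ := hmemT q hq
      refine ⟨m, ?_⟩
      rw [cnt_eq_card h1s, cnt_eq_card h2s, h1c, h2c]
      omega
    apply card_bij'
      (i := fun p hp => swapAt p.1 p.2 (Nat.find (ex1 (hmemS p hp).2.2)))
      (j := fun q hq => swapAt q.1 q.2 (Nat.find (ex2 q hq)))
    case hi =>
      intro p hp
      obtain ⟨⟨h1s, h1c⟩, ⟨h2s, h2c⟩, hbad⟩ := hmemS p hp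
      set h := ex1 hbad
      set t₀ := Nat.find h with ht₀
      have hcross : cnt p.1 t₀ = cnt p.2 t₀ + 1 := find_cross h
      rw [mem_product, mem_powersetCard, mem_powersetCard]
      have c1 := card_swapAt_fst p.1 p.2 t₀
      have c2 := card_swapAt_fst p.2 p.1 t₀
      rw [← swapAt_snd] at c2
      refine ⟨⟨swapAt_fst_subset h1s h2s, by omega⟩, ?_, by omega⟩
      rw [swapAt_snd]
      exact swapAt_fst_subset h2s h1s
    case hj =>
      intro q hq
      obtain ⟨⟨h1s, h1c⟩, h2s, h2c⟩ := hmemT q hq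
      set h := ex2 q hq
      set t₁ := Nat.find h with ht₁
      have hcross : cnt q.2 t₁ = cnt q.1 t₁ + 1 := find_cross h
      rw [mem_filter, mem_product, mem_powersetCard, mem_powersetCard]
      have c1 := card_swapAt_fst q.1 q.2 t₁
      have c2 := card_swapAt_fst q.2 q.1 t₁
      rw [← swapAt_snd] at c2
      obtain ⟨h', hfind⟩ := reflect_core (A := q.2) (B := q.1) h
      constructor
      · refine ⟨⟨swapAt_fst_subset h1s h2s, by omega⟩, ?_, by omega⟩
        rw [swapAt_snd]
        exact swapAt_fst_subset h2s h1s
      · -- swapped pair is bad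
        intro hdom
        obtain ⟨t, hlt⟩ := h'
        rw [swapAt_comm q.2 q.1 t₁] at hlt
        exact absurd (hdom t) (by simpa using hlt)
    case left_inv =>
      intro p hp
      obtain ⟨⟨h1s, h1c⟩, ⟨h2s, h2c⟩, hbad⟩ := hmemS p hp
      set h := ex1 hbad with hh
      obtain ⟨h', hfind⟩ := reflect_core h
      have h2 : ∀ (pf : ∃ t, cnt (swapAt p.1 p.2 (Nat.find h)).1 t
            < cnt (swapAt p.1 p.2 (Nat.find h)).2 t),
          Nat.find pf = Nat.find h := fun pf => hfind
      rw [h2]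
      exact swapAt_swapAt p.1 p.2 (Nat.find h)
    case right_inv =>
      intro q hq
      set h := ex2 q hq with hh
      obtain ⟨h', hfind⟩ := reflect_core (A := q.2) (B := q.1) h
      have h2 : ∀ (pf : ∃ t, cnt (swapAt q.1 q.2 (Nat.find h)).2 t
            < cnt (swapAt q.1 q.2 (Nat.find h)).1 t),
          Nat.find pf = Nat.find h := fun pf => hfind
      rw [h2]
      exact swapAt_swapAt q.1 q.2 (Nat.find h)
  rw [key]
  simp [card_powersetCard, card_range]



lemma narayana_identity {n k : ℕ} (h2 : 2 ≤ k) (hkn : k ≤ n) :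
    n * ((n-1).choose (k-1) * (n-1).choose (k-1))
      = n.choose k * n.choose (k-1) + n * ((n-1).choose (k-2) * (n-1).choose k) := by
  obtain ⟨a, rfl⟩ : ∃ a, k = a + 2 := ⟨k-2, by omega⟩
  obtain ⟨d, rfl⟩ : ∃ d, n = a + 2 + d := ⟨n - (a+2), by omega⟩
  have e1 : a + 2 + d - 1 = a + 1 + d := by omega
  have e2 : a + 2 - 1 = a + 1 := by omega
  have e3 : a + 2 - 2 = a := by omega
  rw [e1, e2, e3]
  have hm : a + 2 + d = (a + 1 + d) + 1 := by omega
  rw [hm]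
  set M := a + 1 + d with hM
  set x := M.choose (a+1) with hx
  set y := M.choose a with hy
  set z := M.choose (a+2) with hz
  set X := (M+1).choose (a+2) with hX
  set Y := (M+1).choose (a+1) with hY
  have f1 : (M+1) * x = X * (a+2) := by
    have := Nat.add_one_mul_choose_eq M (a+1)
    simpa [Nat.succ_eq_add_one, show a+1+1 = a+2 from rfl, ← hX] using this
  have f2 : (M+1) * y = Y * (a+1) := by
    have := Nat.add_one_mul_choose_eq M a
    simpa [Nat.succ_eq_add_one, ← hY] using this
  have f3 : z * (M+1) = X * d := by
    have := Nat.choose_mul_succ_eq M (a+2)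
    have hsub : M + 1 - (a+2) = d := by omega
    rw [hsub] at this
    simpa [← hX] using this
  have f4 : X * (a+2) = Y * (d+1) := by
    have := Nat.choose_succ_right_eq (M+1) (a+1)
    have hsub : M + 1 - (a+1) = d + 1 := by omega
    rw [hsub] at this
    simpa [show a+1+1 = a+2 from rfl, ← hX, ← hY] using this
  have key : ((M+1)*(M+1)) * ((M+1) * (x*x))
      = ((M+1)*(M+1)) * (X * Y + (M+1) * (y * z)) := by
    calc ((M+1)*(M+1)) * ((M+1) * (x*x))
        = ((M+1)*x) * ((M+1)*x) * (M+1) := by ring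
      _ = (X*(a+2)) * ((M+1)*x) * (M+1) := by rw [f1]
      _ = (X*(a+2)) * (X*(a+2)) * (M+1) := by rw [f1]
      _ = (X*(a+2)) * (Y*(d+1)) * (M+1) := by rw [f4]
      _ = X*Y*(((a+2)*(d+1))*(M+1)) := by ring
      _ = X*Y*(((M+1) + (a+1)*d)*(M+1)) := by
          have : (a+2)*(d+1) = (M+1) + (a+1)*d := by rw [hM]; ring
          rw [this]
      _ = X*Y*(M+1)*(M+1) + (Y*(a+1))*(X*d)*(M+1) := by ring
      _ = X*Y*(M+1)*(M+1) + ((M+1)*y)*(z*(M+1))*(M+1) := by rw [f2, f3]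
      _ = ((M+1)*(M+1)) * (X * Y + (M+1) * (y * z)) := by ring
  exact Nat.eq_of_mul_eq_mul_left (by positivity) key



variable {S : Finset ℕ} {k : ℕ}

lemma mem_iff_exists_emb (h : #S = k) {x : ℕ} :
    x ∈ S ↔ ∃ a : Fin k, S.orderEmbOfFin h a = x := by
  constructor
  · intro hx
    have hr := S.range_orderEmbOfFin h
    have : x ∈ Set.range (S.orderEmbOfFin h) := by
      rw [hr]; exact hx
    obtain ⟨a, ha⟩ := this
    exact ⟨a, ha⟩
  · rintro ⟨a, rfl⟩
    exact orderEmbOfFin_mem S h a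

lemma filter_eq_image_emb (h : #S = k) (q : ℕ → Prop) [DecidablePred q] :
    S.filter q
      = (univ.filter (fun a : Fin k => q (S.orderEmbOfFin h a))).image (S.orderEmbOfFin h) := by
  ext x
  simp only [mem_filter, mem_image, mem_univ, true_and]
  constructor
  · rintro ⟨hx, hq⟩
    obtain ⟨a, rfl⟩ := (mem_iff_exists_emb h).1 hx
    exact ⟨a, hq, rfl⟩
  · rintro ⟨a, hq, rfl⟩
    exact ⟨orderEmbOfFin_mem S h a, hq⟩

lemma card_filter_emb (h : #S = k) (q : ℕ → Prop) [DecidablePred q] :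
    #(S.filter q) = #(univ.filter (fun a : Fin k => q (S.orderEmbOfFin h a))) := by
  rw [filter_eq_image_emb h q, card_image_of_injective _ (S.orderEmbOfFin h).injective]

/-- master rank lemma: for a downward-closed predicate `q`, the `a`-th element of `S`
satisfies `q` iff `a` is less than the number of elements of `S` satisfying `q`. -/
lemma rank_lt_iff (h : #S = k) {q : ℕ → Prop} [DecidablePred q]
    (hq : ∀ x y : ℕ, x ≤ y → q y → q x) (a : Fin k) :
    (a : ℕ) < #(S.filter q) ↔ q (S.orderEmbOfFin h a) := by
  rw [card_filter_emb h q]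
  constructor
  · intro hlt
    by_contra hqa
    have hsub : univ.filter (fun b : Fin k => q (S.orderEmbOfFin h b)) ⊆ Finset.Iio a := by
      intro b hb
      rw [mem_filter] at hb
      rw [mem_Iio]
      by_contra hba
      exact hqa (hq _ _ ((S.orderEmbOfFin h).monotone (not_lt.1 hba)) hb.2)
    have hc := card_le_card hsub
    rw [Fin.card_Iio] at hc
    omega
  · intro hqa
    have hsub : Finset.Iic a ⊆ univ.filter (fun b : Fin k => q (S.orderEmbOfFin h b)) := by
      intro b hb
      exact mem_filter.2 ⟨mem_univ _, hq _ _ ((S.orderEmbOfFin h).monotone (mem_Iic.1 hb)) hqa⟩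
    have hc := card_le_card hsub
    rw [Fin.card_Iic] at hc
    omega

lemma count_emb (h : #S = k) (a : Fin k) :
    #(S.filter (fun x => x < S.orderEmbOfFin h a)) = a := by
  have h1 := rank_lt_iff h (q := fun x => x < S.orderEmbOfFin h a)
    (fun x y hxy hy => lt_of_le_of_lt hxy hy) a
  have h2 : ∀ b : Fin k, (b : ℕ) < (a : ℕ) →
      (b : ℕ) < #(S.filter (fun x => x < S.orderEmbOfFin h a)) := by
    intro b hb
    exact (rank_lt_iff h (fun x y hxy hy => lt_of_le_of_lt hxy hy) b).2
      ((S.orderEmbOfFin h).strictMono (by exact hb))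
  have h3 : ¬ ((a : ℕ) < #(S.filter (fun x => x < S.orderEmbOfFin h a))) := by
    rw [h1]; exact lt_irrefl _
  rcases Nat.eq_zero_or_pos (a : ℕ) with h0 | h0
  · omega
  · have := h2 ⟨(a : ℕ) - 1, by omega⟩ (by simp; omega)
    simp at this
    omega

lemma le_emb (h : #S = k) (a : Fin k) : (a : ℕ) ≤ S.orderEmbOfFin h a := by
  have h1 := count_emb h a
  have h2 : S.filter (fun x => x < S.orderEmbOfFin h a) ⊆ range (S.orderEmbOfFin h a) := by
    intro x hx
    exact mem_range.2 (mem_filter.1 hx).2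
  have := card_le_card h2
  rw [card_range] at this
  omega

lemma cnt_compl {n : ℕ} (hS : S ⊆ range n) {t : ℕ} (ht : t ≤ n) :
    #(S.filter (fun x => x < t)) + #((range n \ S).filter (fun x => x < t)) = t := by
  have hu : S.filter (fun x => x < t) ∪ (range n \ S).filter (fun x => x < t) = range t := by
    ext x
    simp only [mem_union, mem_filter, mem_sdiff, mem_range]
    constructor
    · rintro (⟨hx, hlt⟩ | ⟨⟨_, _⟩, hlt⟩) <;> exact hlt
    · intro hlt
      by_cases hx : x ∈ S
      · exact Or.inl ⟨hx, hlt⟩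
      · exact Or.inr ⟨⟨lt_of_lt_of_le hlt ht, hx⟩, hlt⟩
  have hd : Disjoint (S.filter (fun x => x < t)) ((range n \ S).filter (fun x => x < t)) := by
    rw [disjoint_left]
    intro x hx hx'
    exact (mem_sdiff.1 (mem_filter.1 hx').1).2 (mem_filter.1 hx).1
  rw [← card_union_of_disjoint hd, hu, card_range]


section Psi
variable (n k : ℕ) (P V : Finset ℕ)

lemma iso_symm_eq {S : Finset ℕ} {m : ℕ} (h : #S = m) (a : Fin m) {x : ℕ} (hx : x ∈ S)
    (hax : (S.orderEmbOfFin h a : ℕ) = x) :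
    (S.orderIsoOfFin h).symm ⟨x, hx⟩ = a := by
  rw [OrderIso.symm_apply_eq]
  exact Subtype.ext (by rw [Finset.coe_orderIsoOfFin_apply]; exact hax.symm)

noncomputable def psiFun (hP : #P = k) (hV : #V = k)
    (hPc : #(range n \ P) = n - k) (hVc : #(range n \ V) = n - k)
    (hVs : V ⊆ range n) : Fin n → Fin n := fun i =>
  if hi : (i : ℕ) ∈ P then
    ⟨V.orderEmbOfFin hV ((P.orderIsoOfFin hP).symm ⟨(i : ℕ), hi⟩),
      mem_range.1 (hVs (orderEmbOfFin_mem V hV _))⟩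
  else
    ⟨(range n \ V).orderEmbOfFin hVc
        (((range n \ P).orderIsoOfFin hPc).symm ⟨(i : ℕ), mem_sdiff.2 ⟨mem_range.2 i.isLt, hi⟩⟩),
      mem_range.1 (mem_sdiff.1 (orderEmbOfFin_mem _ hVc _)).1⟩

variable (hP : #P = k) (hV : #V = k)
    (hPc : #(range n \ P) = n - k) (hVc : #(range n \ V) = n - k)
    (hVs : V ⊆ range n)

lemma psiFun_val_of_memP {i : Fin n} (a : Fin k)
    (ha : (P.orderEmbOfFin hP a : ℕ) = (i : ℕ)) :
    (psiFun n k P V hP hV hPc hVc hVs i : ℕ) = V.orderEmbOfFin hV a := by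
  have hi : (i : ℕ) ∈ P := ha ▸ orderEmbOfFin_mem P hP a
  have hidx : (P.orderIsoOfFin hP).symm ⟨(i : ℕ), hi⟩ = a := iso_symm_eq hP a hi ha
  simp only [psiFun, dif_pos hi, hidx]

lemma psiFun_val_of_memPc {i : Fin n} (b : Fin (n - k))
    (hb : ((range n \ P).orderEmbOfFin hPc b : ℕ) = (i : ℕ)) :
    (psiFun n k P V hP hV hPc hVc hVs i : ℕ) = (range n \ V).orderEmbOfFin hVc b := by
  have hi : (i : ℕ) ∈ range n \ P := hb ▸ orderEmbOfFin_mem _ hPc b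
  have hi' : (i : ℕ) ∉ P := (mem_sdiff.1 hi).2
  have hidx : ((range n \ P).orderIsoOfFin hPc).symm
      ⟨(i : ℕ), mem_sdiff.2 ⟨mem_range.2 i.isLt, hi'⟩⟩ = b := iso_symm_eq hPc b _ hb
  simp only [psiFun, dif_neg hi', hidx]

lemma psiFun_mem_V {i : Fin n} (hi : (i : ℕ) ∈ P) :
    (psiFun n k P V hP hV hPc hVc hVs i : ℕ) ∈ V := by
  simp only [psiFun, dif_pos hi]
  exact orderEmbOfFin_mem V hV _

lemma psiFun_mem_Vc {i : Fin n} (hi : (i : ℕ) ∉ P) :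
    (psiFun n k P V hP hV hPc hVc hVs i : ℕ) ∈ range n \ V := by
  simp only [psiFun, dif_neg hi]
  exact orderEmbOfFin_mem _ hVc _

lemma psiFun_injective : Function.Injective (psiFun n k P V hP hV hPc hVc hVs) := by
  intro i j hij
  have hval : (psiFun n k P V hP hV hPc hVc hVs i : ℕ)
      = (psiFun n k P V hP hV hPc hVc hVs j : ℕ) := congrArg Fin.val hij
  by_cases hi : (i : ℕ) ∈ P <;> by_cases hj : (j : ℕ) ∈ P
  · obtain ⟨a, ha⟩ := (mem_iff_exists_emb hP).1 hi
    obtain ⟨b, hb⟩ := (mem_iff_exists_emb hP).1 hj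
    rw [psiFun_val_of_memP n k P V hP hV hPc hVc hVs a ha,
      psiFun_val_of_memP n k P V hP hV hPc hVc hVs b hb] at hval
    have hab := (V.orderEmbOfFin hV).injective hval
    apply Fin.ext
    rw [← ha, ← hb, hab]
  · exact absurd (hval ▸ psiFun_mem_V n k P V hP hV hPc hVc hVs hi)
      (mem_sdiff.1 (psiFun_mem_Vc n k P V hP hV hPc hVc hVs hj)).2
  · exact absurd (hval.symm ▸ psiFun_mem_V n k P V hP hV hPc hVc hVs hj)
      (mem_sdiff.1 (psiFun_mem_Vc n k P V hP hV hPc hVc hVs hi)).2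
  · obtain ⟨a, ha⟩ := (mem_iff_exists_emb hPc).1 (mem_sdiff.2 ⟨mem_range.2 i.isLt, hi⟩)
    obtain ⟨b, hb⟩ := (mem_iff_exists_emb hPc).1 (mem_sdiff.2 ⟨mem_range.2 j.isLt, hj⟩)
    rw [psiFun_val_of_memPc n k P V hP hV hPc hVc hVs a ha,
      psiFun_val_of_memPc n k P V hP hV hPc hVc hVs b hb] at hval
    have hab := ((range n \ V).orderEmbOfFin hVc).injective hval
    apply Fin.ext
    rw [← ha, ← hb, hab]

noncomputable def psiPerm : Equiv.Perm (Fin n) :=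
  Equiv.ofBijective _
    (Finite.injective_iff_bijective.1 (psiFun_injective n k P V hP hV hPc hVc hVs))

lemma psiPerm_apply (i : Fin n) :
    psiPerm n k P V hP hV hPc hVc hVs i = psiFun n k P V hP hV hPc hVc hVs i := rfl

end Psi

open scoped Classical

def CCond (n : ℕ) (P V : Finset ℕ) : Prop :=
  ∀ s : ℕ, s < n → #(V.filter (fun x => x < s)) < #(P.filter (fun x => x < s + 1))

noncomputable def lrF {n : ℕ} (π : Equiv.Perm (Fin n)) : Finset (Fin n) :=
  univ.filter (fun i => IsLRMax π i)

lemma mem_lrF {n : ℕ} {π : Equiv.Perm (Fin n)} {i : Fin n} :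
    i ∈ lrF π ↔ IsLRMax π i := by simp [lrF]

noncomputable def Pset {n : ℕ} (π : Equiv.Perm (Fin n)) : Finset ℕ :=
  (lrF π).image Fin.val

noncomputable def Vset {n : ℕ} (π : Equiv.Perm (Fin n)) : Finset ℕ :=
  (lrF π).image (fun i => (π i : ℕ))

lemma val_mem_Pset {n : ℕ} {π : Equiv.Perm (Fin n)} {i : Fin n} :
    (i : ℕ) ∈ Pset π ↔ i ∈ lrF π := by
  constructor
  · rintro hx
    obtain ⟨i', hi', hval⟩ := mem_image.1 hx
    rwa [Fin.ext hval] at hi'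
  · intro h
    exact mem_image.2 ⟨i, h, rfl⟩

section PsiStruct

variable {n k : ℕ} {P V : Finset ℕ}

lemma eP_le_eV (hP : #P = k) (hV : #V = k) (hVs : V ⊆ range n) (hCC : CCond n P V)
    (a : Fin k) :
    (P.orderEmbOfFin hP a : ℕ) ≤ (V.orderEmbOfFin hV a : ℕ) := by
  have hvn : (V.orderEmbOfFin hV a : ℕ) < n := mem_range.1 (hVs (orderEmbOfFin_mem V hV a))
  have h1 := hCC _ hvn
  rw [count_emb hV a] at h1
  have h2 := (rank_lt_iff hP (q := fun x => x < (V.orderEmbOfFin hV a : ℕ) + 1)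
      (fun x y hxy hy => lt_of_le_of_lt hxy hy) a).1 h1
  omega

lemma zero_mem_P (hCC : CCond n P V) (hn : 0 < n) : 0 ∈ P := by
  have h := hCC 0 hn
  have h0 : #(V.filter (fun x => x < 0)) = 0 := by simp
  rw [h0] at h
  obtain ⟨x, hx⟩ := card_pos.1 h
  have hx' := mem_filter.1 hx
  have : x = 0 := by omega
  exact this ▸ hx'.1

lemma psi_isLRMax_of_mem (hP : #P = k) (hV : #V = k)
    (hPc : #(range n \ P) = n - k) (hVc : #(range n \ V) = n - k)
    (hPs : P ⊆ range n) (hVs : V ⊆ range n) (hCC : CCond n P V)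
    {i : Fin n} (hi : (i : ℕ) ∈ P) :
    IsLRMax (psiPerm n k P V hP hV hPc hVc hVs) i := by
  obtain ⟨a, ha⟩ := (mem_iff_exists_emb hP).1 hi
  intro j hj
  have hji : (j : ℕ) < (i : ℕ) := hj
  rw [Fin.lt_def, psiPerm_apply, psiPerm_apply,
    psiFun_val_of_memP n k P V hP hV hPc hVc hVs a ha]
  by_cases hjP : (j : ℕ) ∈ P
  · obtain ⟨b, hb⟩ := (mem_iff_exists_emb hP).1 hjP
    rw [psiFun_val_of_memP n k P V hP hV hPc hVc hVs b hb]
    apply (V.orderEmbOfFin hV).strictMono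
    have hlt : (P.orderEmbOfFin hP b : ℕ) < P.orderEmbOfFin hP a := by
      rw [ha, hb]; exact hji
    exact (P.orderEmbOfFin hP).strictMono.lt_iff_lt.1 hlt
  · obtain ⟨b, hb⟩ := (mem_iff_exists_emb hPc).1 (mem_sdiff.2 ⟨mem_range.2 j.isLt, hjP⟩)
    rw [psiFun_val_of_memPc n k P V hP hV hPc hVc hVs b hb]
    have hvn : (V.orderEmbOfFin hV a : ℕ) ≤ n :=
      le_of_lt (mem_range.1 (hVs (orderEmbOfFin_mem V hV a)))
    have hcompl := cnt_compl hVs hvn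
    have hcV : #(V.filter (fun x => x < (V.orderEmbOfFin hV a : ℕ))) = a := count_emb hV a
    have hcb : #((range n \ P).filter (fun x => x < (j : ℕ))) = b := by
      rw [← hb]; exact count_emb hPc b
    have hss : (range n \ P).filter (fun x => x < (j : ℕ))
        ⊂ (range n \ P).filter (fun x => x < (i : ℕ)) := by
      rw [Finset.ssubset_def]
      constructor
      · intro x hx
        rw [mem_filter] at hx ⊢
        exact ⟨hx.1, lt_trans hx.2 hji⟩
      · intro hsub
        have hjmem : (j : ℕ) ∈ (range n \ P).filter (fun x => x < (i : ℕ)) :=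
          mem_filter.2 ⟨mem_sdiff.2 ⟨mem_range.2 j.isLt, hjP⟩, hji⟩
        have := mem_filter.1 (hsub hjmem)
        omega
    have hlt1 : (b : ℕ) < #((range n \ P).filter (fun x => x < (i : ℕ))) :=
      hcb ▸ card_lt_card hss
    have hcompl2 := cnt_compl hPs (le_of_lt i.isLt)
    have hcP : #(P.filter (fun x => x < (i : ℕ))) = a := by
      rw [← ha]; exact count_emb hP a
    have hle := eP_le_eV hP hV hVs hCC a
    rw [ha] at hle
    exact (rank_lt_iff hVc (fun x y hxy hy => lt_of_le_of_lt hxy hy) b).1 (by omega)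

lemma psi_not_isLRMax_of_not_mem (hP : #P = k) (hV : #V = k)
    (hPc : #(range n \ P) = n - k) (hVc : #(range n \ V) = n - k)
    (hPs : P ⊆ range n) (hVs : V ⊆ range n) (hCC : CCond n P V)
    (hn : 0 < n) (hk1 : 1 ≤ k)
    {i : Fin n} (hi : (i : ℕ) ∉ P) :
    ¬ IsLRMax (psiPerm n k P V hP hV hPc hVc hVs) i := by
  obtain ⟨b, hb⟩ := (mem_iff_exists_emb hPc).1 (mem_sdiff.2 ⟨mem_range.2 i.isLt, hi⟩)
  have h0P : 0 ∈ P := zero_mem_P hCC hn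
  have hi0 : (i : ℕ) ≠ 0 := fun h => hi (h ▸ h0P)
  have hc1 : 1 ≤ #(P.filter (fun x => x < (i : ℕ))) :=
    card_pos.2 ⟨0, mem_filter.2 ⟨h0P, by omega⟩⟩
  have hck : #(P.filter (fun x => x < (i : ℕ))) ≤ k :=
    hP ▸ card_le_card (filter_subset _ _)
  set c := #(P.filter (fun x => x < (i : ℕ))) with hc
  set a : Fin k := ⟨c - 1, by omega⟩ with hadef
  have haP : (P.orderEmbOfFin hP a : ℕ) < (i : ℕ) := by
    apply (rank_lt_iff hP (fun x y hxy hy => lt_of_le_of_lt hxy hy) a).1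
    rw [← hc]
    simp only [hadef]
    omega
  have hPn : (P.orderEmbOfFin hP a : ℕ) < n :=
    mem_range.1 (hPs (orderEmbOfFin_mem P hP a))
  intro hmax
  have hjlt : (⟨P.orderEmbOfFin hP a, hPn⟩ : Fin n) < i := haP
  have hcontra := hmax ⟨P.orderEmbOfFin hP a, hPn⟩ hjlt
  rw [Fin.lt_def, psiPerm_apply, psiPerm_apply,
    psiFun_val_of_memP n k P V hP hV hPc hVc hVs a rfl,
    psiFun_val_of_memPc n k P V hP hV hPc hVc hVs b hb] at hcontra
  -- hcontra : eV a < eVc b ; derive eVc b < eV a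
  have hge : (i : ℕ) ≤ (V.orderEmbOfFin hV a : ℕ) := by
    have hCCi := hCC (i : ℕ) i.isLt
    have hfe : P.filter (fun x => x < (i : ℕ) + 1) = P.filter (fun x => x < (i : ℕ)) := by
      ext x
      simp only [mem_filter]
      constructor
      · rintro ⟨hx, hlt⟩
        refine ⟨hx, ?_⟩
        rcases (by omega : x < (i : ℕ) ∨ x = (i : ℕ)) with h' | h'
        · exact h'
        · exact absurd (h' ▸ hx) hi
      · rintro ⟨hx, hlt⟩
        exact ⟨hx, by omega⟩
    rw [hfe, ← hc] at hCCi
    have hnot : ¬ ((a : ℕ) < #(V.filter (fun x => x < (i : ℕ)))) := by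
      simp only [hadef]
      omega
    rw [rank_lt_iff hV (fun x y hxy hy => lt_of_le_of_lt hxy hy) a] at hnot
    omega
  have hcompl2 := cnt_compl hPs (le_of_lt i.isLt)
  have hcb : #((range n \ P).filter (fun x => x < (i : ℕ))) = b := by
    rw [← hb]; exact count_emb hPc b
  have hvn : (V.orderEmbOfFin hV a : ℕ) ≤ n :=
    le_of_lt (mem_range.1 (hVs (orderEmbOfFin_mem V hV a)))
  have hcompl := cnt_compl hVs hvn
  have hcV : #(V.filter (fun x => x < (V.orderEmbOfFin hV a : ℕ))) = a := count_emb hV a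
  have hfinal := (rank_lt_iff hVc (fun x y hxy hy => lt_of_le_of_lt hxy hy) b).1
    (show (b : ℕ) < #((range n \ V).filter (fun x => x < (V.orderEmbOfFin hV a : ℕ)))
      by simp only [hadef] at *; omega)
  omega

lemma psi_avoids (hP : #P = k) (hV : #V = k)
    (hPc : #(range n \ P) = n - k) (hVc : #(range n \ V) = n - k)
    (hPs : P ⊆ range n) (hVs : V ⊆ range n) (hCC : CCond n P V)
    (hn : 0 < n) (hk1 : 1 ≤ k) :
    Avoids321 (psiPerm n k P V hP hV hPc hVc hVs) := by
  set φ := psiPerm n k P V hP hV hPc hVc hVs with hφ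
  rintro ⟨i, j, l, hij, hjl, h1, h2⟩
  have hjP : (j : ℕ) ∉ P := by
    intro hmem
    exact absurd (psi_isLRMax_of_mem hP hV hPc hVc hPs hVs hCC hmem i hij) (asymm h2)
  have hlP : (l : ℕ) ∉ P := by
    intro hmem
    exact absurd (psi_isLRMax_of_mem hP hV hPc hVc hPs hVs hCC hmem j hjl) (asymm h1)
  obtain ⟨b, hb⟩ := (mem_iff_exists_emb hPc).1 (mem_sdiff.2 ⟨mem_range.2 j.isLt, hjP⟩)
  obtain ⟨c, hc⟩ := (mem_iff_exists_emb hPc).1 (mem_sdiff.2 ⟨mem_range.2 l.isLt, hlP⟩)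
  have hbc : b < c := by
    apply ((range n \ P).orderEmbOfFin hPc).strictMono.lt_iff_lt.1
    rw [hb, hc]
    exact hjl
  have : (φ j : ℕ) < (φ l : ℕ) := by
    rw [hφ, psiPerm_apply, psiPerm_apply,
      psiFun_val_of_memPc n k P V hP hV hPc hVc hVs b hb,
      psiFun_val_of_memPc n k P V hP hV hPc hVc hVs c hc]
    exact ((range n \ V).orderEmbOfFin hVc).strictMono hbc
  exact absurd h1 (by simp only [Fin.lt_def]; omega)

lemma psi_Pset (hP : #P = k) (hV : #V = k)
    (hPc : #(range n \ P) = n - k) (hVc : #(range n \ V) = n - k)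
    (hPs : P ⊆ range n) (hVs : V ⊆ range n) (hCC : CCond n P V)
    (hn : 0 < n) (hk1 : 1 ≤ k) :
    Pset (psiPerm n k P V hP hV hPc hVc hVs) = P := by
  ext x
  constructor
  · intro hx
    obtain ⟨i, hi, rfl⟩ := mem_image.1 hx
    by_contra hxP
    exact psi_not_isLRMax_of_not_mem hP hV hPc hVc hPs hVs hCC hn hk1 hxP (mem_lrF.1 hi)
  · intro hx
    have hxn : x < n := mem_range.1 (hPs hx)
    exact mem_image.2 ⟨⟨x, hxn⟩, mem_lrF.2 (psi_isLRMax_of_mem hP hV hPc hVc hPs hVs hCC hx), rfl⟩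

lemma psi_card_lrF (hP : #P = k) (hV : #V = k)
    (hPc : #(range n \ P) = n - k) (hVc : #(range n \ V) = n - k)
    (hPs : P ⊆ range n) (hVs : V ⊆ range n) (hCC : CCond n P V)
    (hn : 0 < n) (hk1 : 1 ≤ k) :
    #(lrF (psiPerm n k P V hP hV hPc hVc hVs)) = k := by
  have h1 : #(Pset (psiPerm n k P V hP hV hPc hVc hVs))
      = #(lrF (psiPerm n k P V hP hV hPc hVc hVs)) :=
    card_image_of_injective _ Fin.val_injective
  rw [psi_Pset hP hV hPc hVc hPs hVs hCC hn hk1] at h1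
  rw [← h1, hP]

lemma psi_Vset (hP : #P = k) (hV : #V = k)
    (hPc : #(range n \ P) = n - k) (hVc : #(range n \ V) = n - k)
    (hPs : P ⊆ range n) (hVs : V ⊆ range n) (hCC : CCond n P V)
    (hn : 0 < n) (hk1 : 1 ≤ k) :
    Vset (psiPerm n k P V hP hV hPc hVc hVs) = V := by
  set φ := psiPerm n k P V hP hV hPc hVc hVs with hφ
  have hsub : Vset φ ⊆ V := by
    intro y hy
    obtain ⟨i, hi, rfl⟩ := mem_image.1 hy
    have hiP : (i : ℕ) ∈ P := by
      rw [← psi_Pset hP hV hPc hVc hPs hVs hCC hn hk1]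
      exact val_mem_Pset.2 hi
    exact psiFun_mem_V n k P V hP hV hPc hVc hVs hiP
  apply eq_of_subset_of_card_le hsub
  have h1 : #(Vset φ) = #(lrF φ) :=
    card_image_of_injective _ (Fin.val_injective.comp φ.injective)
  rw [h1, psi_card_lrF hP hV hPc hVc hPs hVs hCC hn hk1, hV]

-- forward-direction lemmas, for arbitrary permutations
lemma val_le_of_lr {π : Equiv.Perm (Fin n)} {i : Fin n} (h : IsLRMax π i) :
    (i : ℕ) ≤ (π i : ℕ) := by
  have himg : (Finset.Iio i).image π ⊆ Finset.Iio (π i) := by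
    intro y hy
    obtain ⟨x, hx, rfl⟩ := mem_image.1 hy
    exact mem_Iio.2 (h x (mem_Iio.1 hx))
  have hc := card_le_card himg
  rw [card_image_of_injective _ π.injective, Fin.card_Iio, Fin.card_Iio] at hc
  exact hc

lemma nonmax_mono {π : Equiv.Perm (Fin n)} (hA : Avoids321 π) {i j : Fin n}
    (hi : ¬ IsLRMax π i) (hij : i < j) (hj : ¬ IsLRMax π j) : π i < π j := by
  by_contra hle
  have hne : π j ≠ π i := fun h => absurd (π.injective h) (ne_of_gt hij)
  have hji : π j < π i := lt_of_le_of_ne (not_lt.1 hle) hne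
  rw [IsLRMax] at hi
  push_neg at hi
  obtain ⟨l, hli, hnl⟩ := hi
  have hgt : π i < π l := lt_of_le_of_ne hnl (fun h => (ne_of_lt hli) (π.injective h).symm)
  exact hA ⟨l, i, j, hli, hij, hji, hgt⟩

lemma card_filter_le_val {s : ℕ} (hs : s < n) :
    #(univ.filter (fun x : Fin n => (x : ℕ) ≤ s)) = s + 1 := by
  have he : univ.filter (fun x : Fin n => (x : ℕ) ≤ s) = Finset.Iic ⟨s, hs⟩ := by
    ext x
    simp [Fin.le_def]
  rw [he, Fin.card_Iic]

lemma CC_of_perm {π : Equiv.Perm (Fin n)} : CCond n (Pset π) (Vset π) := by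
  intro s hs
  have h1 : #((Vset π).filter (fun x => x < s))
      = #((lrF π).filter (fun i : Fin n => (π i : ℕ) < s)) := by
    rw [Vset, filter_image]
    exact card_image_of_injective _ (Fin.val_injective.comp π.injective)
  have h2 : #((Pset π).filter (fun x => x < s + 1))
      = #((lrF π).filter (fun i : Fin n => (i : ℕ) < s + 1)) := by
    rw [Pset, filter_image]
    exact card_image_of_injective _ Fin.val_injective
  rw [h1, h2]
  apply card_lt_card
  rw [Finset.ssubset_def]
  constructor
  · intro i hi
    rw [mem_filter] at hi ⊢
    refine ⟨hi.1, ?_⟩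
    have := val_le_of_lr (mem_lrF.1 hi.1)
    omega
  · -- find the max of the first s+1 positions
    intro hsub
    set N := univ.filter (fun x : Fin n => (x : ℕ) ≤ s) with hN
    have hNne : N.Nonempty := ⟨⟨0, by omega⟩, mem_filter.2 ⟨mem_univ _, by simp⟩⟩
    obtain ⟨q, hqN, hqmax⟩ := exists_max_image N π hNne
    have hqs : (q : ℕ) ≤ s := (mem_filter.1 hqN).2
    have hqlr : IsLRMax π q := by
      intro x hx
      have hxN : x ∈ N := mem_filter.2 ⟨mem_univ _, by
        have : (x : ℕ) < (q : ℕ) := hx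
        omega⟩
      exact lt_of_le_of_ne (hqmax x hxN) (fun h => absurd (π.injective h) (ne_of_lt hx))
    have hqval : s ≤ (π q : ℕ) := by
      have himg : N.image π ⊆ Finset.Iic (π q) := by
        intro y hy
        obtain ⟨x, hx, rfl⟩ := mem_image.1 hy
        exact mem_Iic.2 (hqmax x hx)
      have hc := card_le_card himg
      rw [card_image_of_injective _ π.injective, Fin.card_Iic] at hc
      have hcard : #N = s + 1 := by rw [hN]; exact card_filter_le_val hs
      omega
    have hq2 : q ∈ (lrF π).filter (fun i : Fin n => (i : ℕ) < s + 1) :=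
      mem_filter.2 ⟨mem_lrF.2 hqlr, by omega⟩
    have hq1 := mem_filter.1 (hsub hq2)
    omega

lemma Pset_subset_range {π : Equiv.Perm (Fin n)} : Pset π ⊆ range n := by
  intro x hx
  obtain ⟨i, _, rfl⟩ := mem_image.1 hx
  exact mem_range.2 i.isLt

lemma Vset_subset_range {π : Equiv.Perm (Fin n)} : Vset π ⊆ range n := by
  intro x hx
  obtain ⟨i, _, rfl⟩ := mem_image.1 hx
  exact mem_range.2 (π i).isLt

lemma card_Pset {π : Equiv.Perm (Fin n)} : #(Pset π) = #(lrF π) :=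
  card_image_of_injective _ Fin.val_injective

lemma card_Vset {π : Equiv.Perm (Fin n)} : #(Vset π) = #(lrF π) :=
  card_image_of_injective _ (Fin.val_injective.comp π.injective)

lemma perm_eq_psi {π : Equiv.Perm (Fin n)} (hA : Avoids321 π)
    (hP : #(Pset π) = k) (hV : #(Vset π) = k)
    (hPc : #(range n \ Pset π) = n - k) (hVc : #(range n \ Vset π) = n - k)
    (hPs : Pset π ⊆ range n) (hVs : Vset π ⊆ range n) :
    psiPerm n k (Pset π) (Vset π) hP hV hPc hVc hVs = π := by
  have hfV : ∀ a : Fin k,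
      (fun a : Fin k => ((π ⟨(Pset π).orderEmbOfFin hP a,
        mem_range.1 (hPs (orderEmbOfFin_mem _ hP a))⟩ : Fin n) : ℕ)) a ∈ Vset π := by
    intro a
    exact mem_image.2 ⟨_, val_mem_Pset.1 (orderEmbOfFin_mem _ hP a), rfl⟩
  have hmono : StrictMono (fun a : Fin k => ((π ⟨(Pset π).orderEmbOfFin hP a,
      mem_range.1 (hPs (orderEmbOfFin_mem _ hP a))⟩ : Fin n) : ℕ)) := by
    intro a b hab
    have hpos : ((Pset π).orderEmbOfFin hP a : ℕ) < (Pset π).orderEmbOfFin hP b :=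
      ((Pset π).orderEmbOfFin hP).strictMono hab
    have hlr : (⟨(Pset π).orderEmbOfFin hP b,
        mem_range.1 (hPs (orderEmbOfFin_mem _ hP b))⟩ : Fin n) ∈ lrF π :=
      val_mem_Pset.1 (orderEmbOfFin_mem _ hP b)
    exact (mem_lrF.1 hlr) _ hpos
  have hfeq := orderEmbOfFin_unique hV hfV hmono
  have hgV : ∀ b : Fin (n - k),
      (fun b : Fin (n - k) => ((π ⟨(range n \ Pset π).orderEmbOfFin hPc b,
        mem_range.1 (mem_sdiff.1 (orderEmbOfFin_mem _ hPc b)).1⟩ : Fin n) : ℕ)) b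
        ∈ range n \ Vset π := by
    intro b
    rw [mem_sdiff]
    refine ⟨mem_range.2 (π _).isLt, ?_⟩
    intro hmem
    obtain ⟨i', hi', hval⟩ := mem_image.1 hmem
    have : π i' = π _ := Fin.ext hval
    have hii := π.injective this
    rw [hii] at hi'
    have := val_mem_Pset.2 hi'
    exact (mem_sdiff.1 (orderEmbOfFin_mem _ hPc b)).2 this
  have hgmono : StrictMono (fun b : Fin (n - k) => ((π ⟨(range n \ Pset π).orderEmbOfFin hPc b,
      mem_range.1 (mem_sdiff.1 (orderEmbOfFin_mem _ hPc b)).1⟩ : Fin n) : ℕ)) := by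
    intro a b hab
    have hpos : ((range n \ Pset π).orderEmbOfFin hPc a : ℕ)
        < (range n \ Pset π).orderEmbOfFin hPc b :=
      ((range n \ Pset π).orderEmbOfFin hPc).strictMono hab
    have hnlr1 : ¬ IsLRMax π ⟨(range n \ Pset π).orderEmbOfFin hPc a,
        mem_range.1 (mem_sdiff.1 (orderEmbOfFin_mem _ hPc a)).1⟩ := by
      intro h
      exact (mem_sdiff.1 (orderEmbOfFin_mem _ hPc a)).2 (val_mem_Pset.2 (mem_lrF.2 h))
    have hnlr2 : ¬ IsLRMax π ⟨(range n \ Pset π).orderEmbOfFin hPc b,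
        mem_range.1 (mem_sdiff.1 (orderEmbOfFin_mem _ hPc b)).1⟩ := by
      intro h
      exact (mem_sdiff.1 (orderEmbOfFin_mem _ hPc b)).2 (val_mem_Pset.2 (mem_lrF.2 h))
    exact nonmax_mono hA hnlr1 hpos hnlr2
  have hgeq := orderEmbOfFin_unique hVc hgV hgmono
  apply Equiv.ext
  intro i
  by_cases hi : (i : ℕ) ∈ Pset π
  · obtain ⟨a, ha⟩ := (mem_iff_exists_emb hP).1 hi
    apply Fin.ext
    rw [psiPerm_apply, psiFun_val_of_memP n k (Pset π) (Vset π) hP hV hPc hVc hVs a ha]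
    have h2 := congrFun hfeq a
    have hieq : (⟨(Pset π).orderEmbOfFin hP a,
        mem_range.1 (hPs (orderEmbOfFin_mem _ hP a))⟩ : Fin n) = i := Fin.ext ha
    rw [hieq] at h2
    exact h2.symm
  · obtain ⟨b, hb⟩ := (mem_iff_exists_emb hPc).1 (mem_sdiff.2 ⟨mem_range.2 i.isLt, hi⟩)
    apply Fin.ext
    rw [psiPerm_apply, psiFun_val_of_memPc n k (Pset π) (Vset π) hP hV hPc hVc hVs b hb]
    have h2 := congrFun hgeq b
    have hieq : (⟨(range n \ Pset π).orderEmbOfFin hPc b,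
        mem_range.1 (mem_sdiff.1 (orderEmbOfFin_mem _ hPc b)).1⟩ : Fin n) = i := Fin.ext hb
    rw [hieq] at h2
    exact h2.symm

end PsiStruct

lemma last_mem_V {n k : ℕ} {P V : Finset ℕ} (hP : #P = k) (hV : #V = k)
    (hVs : V ⊆ range n) (hCC : CCond n P V) (hn : 0 < n) : n - 1 ∈ V := by
  by_contra hmem
  have h := hCC (n - 1) (by omega)
  have heq : V.filter (fun x => x < n - 1) = V := by
    apply filter_true_of_mem
    intro x hx
    have hxn := mem_range.1 (hVs hx)
    have hne : x ≠ n - 1 := fun h' => hmem (h' ▸ hx)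
    omega
  rw [heq, hV] at h
  have hle : #(P.filter (fun x => x < n - 1 + 1)) ≤ #P := card_le_card (filter_subset _ _)
  omega

open scoped Classical in
lemma card_goodPV (n k : ℕ) (hn : 0 < n) (hk : 1 ≤ k) :
    #((powersetCard k (range n) ×ˢ powersetCard k (range n)).filter
        (fun p => CCond n p.1 p.2))
      = #((powersetCard (k-1) (range (n-1)) ×ˢ powersetCard (k-1) (range (n-1))).filter
          (fun p => ∀ t, cnt p.1 t ≤ cnt p.2 t)) := by
  have hmemS : ∀ p : Finset ℕ × Finset ℕ,
      p ∈ (powersetCard k (range n) ×ˢ powersetCard k (range n)).filter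
        (fun p => CCond n p.1 p.2) →
      (p.1 ⊆ range n ∧ #p.1 = k) ∧ (p.2 ⊆ range n ∧ #p.2 = k) ∧ CCond n p.1 p.2 := by
    intro p hp
    rw [mem_filter, mem_product, mem_powersetCard, mem_powersetCard] at hp
    exact ⟨hp.1.1, hp.1.2, hp.2⟩
  have hmemT : ∀ q : Finset ℕ × Finset ℕ,
      q ∈ (powersetCard (k-1) (range (n-1)) ×ˢ powersetCard (k-1) (range (n-1))).filter
          (fun p => ∀ t, cnt p.1 t ≤ cnt p.2 t) →
      (q.1 ⊆ range (n-1) ∧ #q.1 = k-1) ∧ (q.2 ⊆ range (n-1) ∧ #q.2 = k-1)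
        ∧ ∀ t, cnt q.1 t ≤ cnt q.2 t := by
    intro q hq
    rw [mem_filter, mem_product, mem_powersetCard, mem_powersetCard] at hq
    exact ⟨hq.1.1, hq.1.2, hq.2⟩
  apply card_bij'
    (i := fun p _ => (p.2.erase (n-1), (p.1.erase 0).image (fun x => x - 1)))
    (j := fun q _ => (insert 0 (q.2.image (fun x => x + 1)), insert (n-1) q.1))
  case hi =>
    intro p hp
    obtain ⟨⟨hPs, hPk⟩, ⟨hVs, hVk⟩, hCC⟩ := hmemS p hp
    have h0 : 0 ∈ p.1 := zero_mem_P hCC hn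
    have hlast : n - 1 ∈ p.2 := last_mem_V hPk hVk hVs hCC hn
    have hinjOn : Set.InjOn (fun x => x - 1) (p.1.erase 0) := by
      intro x hx y hy hxy
      have hx1 := mem_erase.1 hx
      have hy1 := mem_erase.1 hy
      simp only at hxy
      omega
    rw [mem_filter, mem_product, mem_powersetCard, mem_powersetCard]
    refine ⟨⟨⟨?_, ?_⟩, ?_, ?_⟩, ?_⟩
    · -- A ⊆ range (n-1)
      intro x hx
      have hx1 := mem_erase.1 hx
      have := mem_range.1 (hVs hx1.2)
      rw [mem_range]
      omega
    · rw [card_erase_of_mem hlast, hVk]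
    · -- B ⊆ range (n-1)
      intro x hx
      obtain ⟨y, hy, rfl⟩ := mem_image.1 hx
      have hy1 := mem_erase.1 hy
      have := mem_range.1 (hPs hy1.2)
      rw [mem_range]
      omega
    · rw [card_image_of_injOn hinjOn, card_erase_of_mem h0, hPk]
    · -- domination
      intro t
      show cnt (p.2.erase (n-1)) t ≤ cnt ((p.1.erase 0).image (fun x => x - 1)) t
      by_cases ht : t ≤ n - 1
      · have hA : cnt (p.2.erase (n-1)) t = #(p.2.filter (fun x => x < t)) := by
          unfold cnt
          congr 1
          ext x
          simp only [mem_filter, mem_erase]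
          constructor
          · rintro ⟨⟨_, hx⟩, hlt⟩; exact ⟨hx, hlt⟩
          · rintro ⟨hx, hlt⟩; exact ⟨⟨by omega, hx⟩, hlt⟩
        have hB : cnt ((p.1.erase 0).image (fun x => x - 1)) t + 1
            = #(p.1.filter (fun x => x < t + 1)) := by
          unfold cnt
          have himg : ((p.1.erase 0).image (fun x => x - 1)).filter (fun x => x < t)
              = ((p.1.erase 0).filter (fun x => x < t + 1)).image (fun x => x - 1) := by
            rw [filter_image]
            congr 1
            apply filter_congr
            intro x hx
            have hx0 : x ≠ 0 := (mem_erase.1 hx).1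
            omega
          rw [himg, card_image_of_injOn (hinjOn.mono (by intro x hx; exact (filter_subset _ _ hx)))]
          have hsplit : p.1.filter (fun x => x < t + 1)
              = insert 0 ((p.1.erase 0).filter (fun x => x < t + 1)) := by
            ext x
            simp only [mem_insert, mem_filter, mem_erase]
            constructor
            · rintro ⟨hx, hlt⟩
              by_cases hx0 : x = 0
              · exact Or.inl hx0
              · exact Or.inr ⟨⟨hx0, hx⟩, hlt⟩
            · rintro (rfl | ⟨⟨_, hx⟩, hlt⟩)
              · exact ⟨h0, by omega⟩
              · exact ⟨hx, hlt⟩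
          rw [hsplit, card_insert_of_notMem
            (fun h => (mem_erase.1 (mem_filter.1 h).1).1 rfl)]
        have hcc := hCC t (by omega)
        unfold cnt at *
        omega
      · -- t > n-1 : saturation
        have hA : cnt (p.2.erase (n-1)) t ≤ #p.2 - 1 := by
          unfold cnt
          have := card_le_card (filter_subset (fun x => x < t) (p.2.erase (n-1)))
          rw [card_erase_of_mem hlast] at this
          exact this
        have hB : cnt ((p.1.erase 0).image (fun x => x - 1)) t = #p.1 - 1 := by
          unfold cnt
          rw [filter_true_of_mem, card_image_of_injOn hinjOn, card_erase_of_mem h0]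
          intro x hx
          obtain ⟨y, hy, rfl⟩ := mem_image.1 hx
          have := mem_range.1 (hPs (mem_erase.1 hy).2)
          omega
        omega
  case hj =>
    intro q hq
    obtain ⟨⟨hAs, hAk⟩, ⟨hBs, hBk⟩, hdom⟩ := hmemT q hq
    have h0img : (0 : ℕ) ∉ q.2.image (fun x => x + 1) := by simp
    have hlastA : n - 1 ∉ q.1 := fun h => by
      have := mem_range.1 (hAs h); omega
    rw [mem_filter, mem_product, mem_powersetCard, mem_powersetCard]
    refine ⟨⟨⟨?_, ?_⟩, ?_, ?_⟩, ?_⟩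
    · intro x hx
      rcases mem_insert.1 hx with rfl | hx'
      · exact mem_range.2 hn
      · obtain ⟨y, hy, rfl⟩ := mem_image.1 hx'
        have := mem_range.1 (hBs hy)
        rw [mem_range]
        omega
    · rw [card_insert_of_notMem h0img, card_image_of_injective _ (fun x y h => by omega), hBk]
      omega
    · intro x hx
      rcases mem_insert.1 hx with rfl | hx'
      · exact mem_range.2 (by omega)
      · have := mem_range.1 (hAs hx')
        rw [mem_range]
        omega
    · rw [card_insert_of_notMem hlastA, hAk]
      omega
    · -- CCond
      intro s hs
      have hV : #((insert (n-1) q.1).filter (fun x => x < s)) = cnt q.1 s := by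
        unfold cnt
        congr 1
        ext x
        simp only [mem_filter, mem_insert]
        constructor
        · rintro ⟨rfl | hx, hlt⟩
          · omega
          · exact ⟨hx, hlt⟩
        · rintro ⟨hx, hlt⟩
          exact ⟨Or.inr hx, hlt⟩
      have hPf : (insert 0 (q.2.image (fun x => x + 1))).filter (fun x => x < s + 1)
          = insert 0 ((q.2.filter (fun x => x < s)).image (fun x => x + 1)) := by
        ext x
        simp only [mem_filter, mem_insert, mem_image]
        constructor
        · rintro ⟨rfl | ⟨y, hy, rfl⟩, hlt⟩
          · exact Or.inl rfl
          · exact Or.inr ⟨y, ⟨hy, by omega⟩, rfl⟩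
        · rintro (rfl | ⟨y, ⟨hy, hlt⟩, rfl⟩)
          · exact ⟨Or.inl rfl, by omega⟩
          · exact ⟨Or.inr ⟨y, hy, rfl⟩, by omega⟩
      have hP : #((insert 0 (q.2.image (fun x => x + 1))).filter (fun x => x < s + 1))
          = cnt q.2 s + 1 := by
        rw [hPf, card_insert_of_notMem (by simp),
          card_image_of_injective _ (fun x y h => by omega)]
        rfl
      rw [hV, hP]
      exact Nat.lt_succ_of_le (hdom s)
  case left_inv =>
    intro p hp
    obtain ⟨⟨hPs, hPk⟩, ⟨hVs, hVk⟩, hCC⟩ := hmemS p hp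
    have h0 : 0 ∈ p.1 := zero_mem_P hCC hn
    have hlast : n - 1 ∈ p.2 := last_mem_V hPk hVk hVs hCC hn
    have hfst : insert 0 (((p.1.erase 0).image (fun x => x - 1)).image (fun x => x + 1)) = p.1 := by
      rw [Finset.image_image]
      have : (p.1.erase 0).image ((fun x => x + 1) ∘ (fun x => x - 1)) = p.1.erase 0 := by
        rw [Finset.image_congr (g := id), Finset.image_id]
        intro x hx
        have := mem_erase.1 hx
        simp only [Function.comp_apply, id_eq]
        omega
      rw [this, insert_erase h0]
    have hsnd : insert (n-1) (p.2.erase (n-1)) = p.2 := insert_erase hlast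
    exact Prod.ext hfst hsnd
  case right_inv =>
    intro q hq
    obtain ⟨⟨hAs, hAk⟩, ⟨hBs, hBk⟩, hdom⟩ := hmemT q hq
    have hlastA : n - 1 ∉ q.1 := fun h => by
      have := mem_range.1 (hAs h); omega
    have hfst : (insert (n-1) q.1).erase (n-1) = q.1 := erase_insert hlastA
    have hsnd : ((insert 0 (q.2.image (fun x => x + 1))).erase 0).image (fun x => x - 1)
        = q.2 := by
      rw [erase_insert (by simp), Finset.image_image]
      rw [Finset.image_congr (g := id), Finset.image_id]
      intro x hx
      simp only [Function.comp_apply, id_eq]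
      omega
    exact Prod.ext hfst hsnd

lemma compl_card {n k : ℕ} {P : Finset ℕ} (hPs : P ⊆ range n) (hP : #P = k) :
    #(range n \ P) = n - k := by
  rw [card_sdiff_of_subset hPs, card_range, hP]

open scoped Classical in
lemma card_perms (n k : ℕ) (hn : 0 < n) (hk : 1 ≤ k) :
    #((univ : Finset (Equiv.Perm (Fin n))).filter
        (fun π => Avoids321 π ∧ #(lrF π) = k))
      = #((powersetCard k (range n) ×ˢ powersetCard k (range n)).filter
          (fun p => CCond n p.1 p.2)) := by
  have hmemT : ∀ p : Finset ℕ × Finset ℕ,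
      p ∈ (powersetCard k (range n) ×ˢ powersetCard k (range n)).filter
        (fun p => CCond n p.1 p.2) →
      (p.1 ⊆ range n ∧ #p.1 = k) ∧ (p.2 ⊆ range n ∧ #p.2 = k) ∧ CCond n p.1 p.2 := by
    intro p hp
    rw [mem_filter, mem_product, mem_powersetCard, mem_powersetCard] at hp
    exact ⟨hp.1.1, hp.1.2, hp.2⟩
  apply card_bij' (i := fun π _ => (Pset π, Vset π))
    (j := fun p hp => psiPerm n k p.1 p.2 ((hmemT p hp).1.2) ((hmemT p hp).2.1.2)
      (compl_card (hmemT p hp).1.1 (hmemT p hp).1.2)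
      (compl_card (hmemT p hp).2.1.1 (hmemT p hp).2.1.2)
      (hmemT p hp).2.1.1)
  case hi =>
    intro π hπ
    have hlr := (mem_filter.1 hπ).2.2
    rw [mem_filter, mem_product, mem_powersetCard, mem_powersetCard]
    refine ⟨⟨⟨Pset_subset_range, ?_⟩, Vset_subset_range, ?_⟩, CC_of_perm⟩
    · rw [card_Pset, hlr]
    · rw [card_Vset, hlr]
  case hj =>
    intro p hp
    obtain ⟨⟨hPs, hPk⟩, ⟨hVs, hVk⟩, hCC⟩ := hmemT p hp
    rw [mem_filter]
    exact ⟨mem_univ _,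
      psi_avoids _ _ _ _ hPs _ hCC hn hk,
      psi_card_lrF _ _ _ _ hPs _ hCC hn hk⟩
  case left_inv =>
    intro π hπ
    have hA := (mem_filter.1 hπ).2.1
    exact perm_eq_psi hA _ _ _ _ Pset_subset_range Vset_subset_range
  case right_inv =>
    intro p hp
    obtain ⟨⟨hPs, hPk⟩, ⟨hVs, hVk⟩, hCC⟩ := hmemT p hp
    exact Prod.ext (psi_Pset _ _ _ _ hPs _ hCC hn hk) (psi_Vset _ _ _ _ hPs _ hCC hn hk)

open scoped Classical in
lemma card_good (m j : ℕ) (hj : 1 ≤ j) :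
    #((powersetCard j (range m) ×ˢ powersetCard j (range m)).filter
        (fun p => ∀ t, cnt p.1 t ≤ cnt p.2 t))
      + m.choose (j-1) * m.choose (j+1) = m.choose j * m.choose j := by
  rw [← card_bad m j hj, card_filter_add_card_filter_not]
  simp [card_powersetCard, card_range]

open scoped Classical in
lemma card_good_zero (m : ℕ) :
    #((powersetCard 0 (range m) ×ˢ powersetCard 0 (range m)).filter
        (fun p => ∀ t, cnt p.1 t ≤ cnt p.2 t)) = 1 := by
  rw [filter_true_of_mem]
  · simp [card_powersetCard]
  · intro p hp t
    rw [mem_product, mem_powersetCard, mem_powersetCard] at hp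
    have h1 : p.1 = ∅ := card_eq_zero.1 hp.1.2
    rw [h1]
    simp [cnt]

end N321

open Finset in
open scoped Classical in
/-- For `1 ≤ k ≤ n`, the number of 321-avoiding permutations of `{1,...,n}` with
exactly `k` left-to-right maxima is the Narayana number `(1/n) C(n,k) C(n,k-1)`
(stated multiplied through by `n` to stay in the natural numbers). -/
theorem card_avoids321_with_k_lr_maxima (n k : ℕ) (hk : 1 ≤ k) (hkn : k ≤ n) :
    n * Nat.card {π : Equiv.Perm (Fin n) //
        Avoids321 π ∧ Nat.card {i : Fin n // IsLRMax π i} = k} =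
      Nat.choose n k * Nat.choose n (k - 1) := by
  have hn : 0 < n := lt_of_lt_of_le hk hkn
  have hinner : ∀ π : Equiv.Perm (Fin n),
      Nat.card {i : Fin n // IsLRMax π i} = #(N321.lrF π) := by
    intro π
    rw [Nat.card_eq_fintype_card, Fintype.card_subtype]
    unfold N321.lrF
    congr 1
  have hcard : Nat.card {π : Equiv.Perm (Fin n) //
        Avoids321 π ∧ Nat.card {i : Fin n // IsLRMax π i} = k}
      = #((univ : Finset (Equiv.Perm (Fin n))).filter
          (fun π => Avoids321 π ∧ #(N321.lrF π) = k)) := by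
    rw [Nat.card_eq_fintype_card, Fintype.card_subtype]
    apply congrArg Finset.card
    apply filter_congr
    intro π _
    rw [hinner π]
  rw [hcard, N321.card_perms n k hn hk, N321.card_goodPV n k hn hk]
  rcases eq_or_lt_of_le hk with h1 | h2
  · -- k = 1
    rw [← h1]
    simp only [Nat.sub_self]
    rw [N321.card_good_zero (n-1)]
    simp [Nat.choose_one_right]
  · have hk2 : 2 ≤ k := h2
    have hcg := N321.card_good (n-1) (k-1) (by omega)
    have e1 : k - 1 - 1 = k - 2 := by omega
    have e2 : k - 1 + 1 = k := by omega
    rw [e1, e2] at hcg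
    have hni := N321.narayana_identity hk2 hkn
    have h3 : n * #((powersetCard (k-1) (range (n-1)) ×ˢ powersetCard (k-1) (range (n-1))).filter
          (fun p => ∀ t, N321.cnt p.1 t ≤ N321.cnt p.2 t))
        + n * ((n-1).choose (k-2) * (n-1).choose k)
        = n * ((n-1).choose (k-1) * (n-1).choose (k-1)) := by
      rw [← Nat.mul_add, hcg]
    rw [hni] at h3
    exact Nat.add_right_cancel h3
end
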